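/- arXiv:2104.07317 — 5 statements merged into one kernel-verified Lean document; each statement's English description precedes it below -/
import Mathlib

section
/- For all integers n, k ≥ 1 and every distribution P = (p_1, p_2, …) ∈ D_k, under Poisson sampling (N_i independent with N_i ~ Poisson(n·p_i)) the plug-in estimator Ŝ_plug = Σ_i 1{N_i > 0} satisfies E(S(P) − Ŝ_plug)² ≤ k²·e^{−2n/k} + k·e^{−n/k}. -/
open MeasureTheory ProbabilityTheory Real ENNReal

/-- `P` is a probability distribution on `ℕ`. -/
def IsDist (P : ℕ → ℝ) : Prop := (∀ i, 0 ≤ P i) ∧ HasSum P 1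

/-- `P` belongs to `D_k`: all nonzero masses are at least `1/k`. -/
def MemDk (k : ℕ) (P : ℕ → ℝ) : Prop :=
  IsDist P ∧ ∀ i, P i ≠ 0 → 1 / (k : ℝ) ≤ P i

/-- Support size `S(P)`. -/
noncomputable def suppSize (P : ℕ → ℝ) : ℕ := Set.ncard {i | P i ≠ 0}

lemma poisson_zero (r : NNReal) : poissonMeasure r {0} = ENNReal.ofReal (Real.exp (-r)) := by
  rw [poissonMeasure_singleton]
  simp

theorem stmt4 (n k : ℕ) (hn : 1 ≤ n) (hk : 1 ≤ k) (P : ℕ → ℝ) (hP : MemDk k P)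
    {Ω : Type*} [MeasurableSpace Ω] (μ : Measure Ω) [IsProbabilityMeasure μ]
    (N : ℕ → Ω → ℕ) (hmeas : ∀ i, Measurable (N i))
    (hindep : iIndepFun N μ)
    (hlaw : ∀ i, μ.map (N i) = poissonMeasure (Real.toNNReal (n * P i))) :
    ∫⁻ ω, ENNReal.ofReal
        (((suppSize P : ℝ) - ∑' i, if 0 < N i ω then (1 : ℝ) else 0) ^ 2) ∂μ
      ≤ ENNReal.ofReal ((k : ℝ) ^ 2 * exp (-2 * n / k) + k * exp (-(n : ℝ) / k)) := by
  obtain ⟨⟨hpos, hsum⟩, hbig⟩ := hP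
  have hk0 : (0:ℝ) < k := by positivity
  have hn0 : (0:ℝ) < n := by positivity
  -- finiteness of the support
  have hfin : {i | P i ≠ 0}.Finite := by
    have hlt : ∀ᶠ i in Filter.cofinite, P i < 1/(k:ℝ) :=
      hsum.summable.tendsto_cofinite_zero.eventually (eventually_lt_nhds (by positivity))
    refine (Filter.eventually_cofinite.mp hlt).subset ?_
    intro i hi
    simp only [Set.mem_setOf_eq, not_lt]
    exact hbig i hi
  set T : Finset ℕ := hfin.toFinset with hTdef
  have hmemT : ∀ i, i ∈ T ↔ P i ≠ 0 := fun i => hfin.mem_toFinset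
  have hS : (suppSize P : ℝ) = (T.card : ℝ) := by
    rw [suppSize, Set.ncard_eq_toFinset_card _ hfin]
  -- card bound
  have hsumT : ∑ i ∈ T, P i = 1 := by
    rw [← hsum.tsum_eq]
    exact (tsum_eq_sum (fun i hi => by simpa using (hmemT i).not.mp hi)).symm
  have hcard : (T.card : ℝ) ≤ (k : ℝ) := by
    have h1 : (T.card : ℝ) * (1/(k:ℝ)) ≤ ∑ i ∈ T, P i := by
      have := Finset.card_nsmul_le_sum T P (1/(k:ℝ)) (fun i hi => hbig i ((hmemT i).mp hi))
      simpa [nsmul_eq_mul] using this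
    rw [hsumT] at h1
    rw [mul_one_div, div_le_one hk0] at h1
    linarith
  -- law of N i at 0
  have hzero : ∀ i, μ (N i ⁻¹' {0}) = ENNReal.ofReal (Real.exp (-(n * P i))) := by
    intro i
    rw [← Measure.map_apply (hmeas i) (measurableSet_singleton 0), hlaw i, poisson_zero]
    rw [Real.coe_toNNReal _ (mul_nonneg (by positivity) (hpos i))]
  -- a.e., all N i for i outside the support vanish
  have hae : ∀ᵐ ω ∂μ, ∀ i, i ∉ T → N i ω = 0 := by
    rw [ae_all_iff]
    intro i
    by_cases hi : i ∈ T
    · exact Filter.Eventually.of_forall (fun ω h => absurd hi h)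
    · have hPi : P i = 0 := by simpa [hmemT i] using hi
      have h1 : μ (N i ⁻¹' {0}) = 1 := by simp [hzero i, hPi]
      have h2 : μ (N i ⁻¹' {0})ᶜ = 0 := by
        rw [prob_compl_eq_one_sub ((hmeas i) (measurableSet_singleton 0)), h1]
        simp
      filter_upwards [measure_eq_zero_iff_ae_notMem.mp h2] with ω hω _
      simpa using hω
  classical
  set e1 : ℝ := Real.exp (-(n:ℝ)/k) with he1
  set e2 : ℝ := Real.exp (-2*(n:ℝ)/k) with he2
  have he1pos : 0 < e1 := Real.exp_pos _
  have he2pos : 0 < e2 := Real.exp_pos _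
  set A : ℕ → Set Ω := fun i => N i ⁻¹' {0} with hAdef
  have hAmeas : ∀ i, MeasurableSet (A i) := fun i => (hmeas i) (measurableSet_singleton 0)
  set g : ℕ → Ω → ℝ := fun i ω => if N i ω = 0 then 1 else 0 with hgdef
  have hgnn : ∀ i ω, 0 ≤ g i ω := by
    intro i ω; simp only [hgdef]; split <;> norm_num
  have hgmeas : ∀ i, Measurable (g i) := by
    intro i
    exact Measurable.ite (hAmeas i) measurable_const measurable_const
  -- rewrite the integrand a.e.
  have hinteg : ∫⁻ ω, ENNReal.ofReal
        (((suppSize P : ℝ) - ∑' i, if 0 < N i ω then (1 : ℝ) else 0) ^ 2) ∂μ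
      = ∫⁻ ω, ENNReal.ofReal ((∑ i ∈ T, g i ω) ^ 2) ∂μ := by
    refine lintegral_congr_ae ?_
    filter_upwards [hae] with ω hω
    have htsum : (∑' i, if 0 < N i ω then (1:ℝ) else 0)
        = ∑ i ∈ T, (if 0 < N i ω then (1:ℝ) else 0) :=
      tsum_eq_sum (fun i hi => by simp [hω i hi])
    have hpoint : ∀ i, g i ω = 1 - (if 0 < N i ω then (1:ℝ) else 0) := by
      intro i
      rcases Nat.eq_zero_or_pos (N i ω) with h | h
      · simp [hgdef, h]
      · simp [hgdef, h, h.ne']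
    have hsg : (∑ i ∈ T, g i ω)
        = (T.card : ℝ) - ∑ i ∈ T, (if 0 < N i ω then (1:ℝ) else 0) := by
      simp [hpoint, Finset.sum_sub_distrib]
    rw [htsum, hS, ← hsg]
  rw [hinteg]
  -- expand the square
  have hsq : ∀ ω, ENNReal.ofReal ((∑ i ∈ T, g i ω) ^ 2)
      = ∑ i ∈ T, ∑ j ∈ T, ENNReal.ofReal (g i ω * g j ω) := by
    intro ω
    rw [sq, Finset.sum_mul_sum]
    rw [ENNReal.ofReal_sum_of_nonneg
      (fun i _ => Finset.sum_nonneg (fun j _ => mul_nonneg (hgnn i ω) (hgnn j ω)))]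
    exact Finset.sum_congr rfl (fun i _ => ENNReal.ofReal_sum_of_nonneg
      (fun j _ => mul_nonneg (hgnn i ω) (hgnn j ω)))
  simp_rw [hsq]
  rw [lintegral_finset_sum (f := fun i ω => ∑ j ∈ T, ENNReal.ofReal (g i ω * g j ω)) _ (fun i _ => Finset.measurable_sum _
    (fun j _ => (((hgmeas i).mul (hgmeas j)).ennreal_ofReal)))]
  have hswap : ∀ i ∈ T, ∫⁻ ω, ∑ j ∈ T, ENNReal.ofReal (g i ω * g j ω) ∂μ
      = ∑ j ∈ T, ∫⁻ ω, ENNReal.ofReal (g i ω * g j ω) ∂μ := fun i _ =>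
    lintegral_finset_sum _ (fun j _ => ((hgmeas i).mul (hgmeas j)).ennreal_ofReal)
  rw [Finset.sum_congr rfl hswap]
  -- each term equals the probability of the intersection
  have hterm : ∀ i j, ∫⁻ ω, ENNReal.ofReal (g i ω * g j ω) ∂μ = μ (A i ∩ A j) := by
    intro i j
    have hpt : ∀ ω, ENNReal.ofReal (g i ω * g j ω)
        = (A i ∩ A j).indicator (fun _ => (1:ℝ≥0∞)) ω := by
      intro ω
      by_cases hi : N i ω = 0 <;> by_cases hj : N j ω = 0 <;>
        simp [hgdef, hi, hj, Set.indicator, hAdef, Set.mem_inter_iff, Set.mem_preimage]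
    simp_rw [hpt]
    exact lintegral_indicator_one ((hAmeas i).inter (hAmeas j))
  -- bounds on the probabilities
  have hA1 : ∀ i ∈ T, μ (A i) ≤ ENNReal.ofReal e1 := by
    intro i hi
    rw [hAdef, hzero i]
    apply ENNReal.ofReal_le_ofReal
    rw [he1, neg_div]
    apply Real.exp_le_exp.mpr
    have h1 : 1/(k:ℝ) ≤ P i := hbig i ((hmemT i).mp hi)
    have h2 : (n:ℝ)/k ≤ n * P i := by
      rw [div_eq_mul_one_div]
      exact mul_le_mul_of_nonneg_left h1 hn0.le
    linarith
  have hpair : ∀ i ∈ T, ∀ j ∈ T,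
      μ (A i ∩ A j) ≤ ENNReal.ofReal (if i = j then e1 else e2) := by
    intro i hi j hj
    by_cases hij : i = j
    · subst hij
      simpa [Set.inter_self] using hA1 i hi
    · have hind : μ (N i ⁻¹' {0} ∩ N j ⁻¹' {0}) = μ (N i ⁻¹' {0}) * μ (N j ⁻¹' {0}) :=
        (hindep.indepFun hij).measure_inter_preimage_eq_mul {0} {0}
          (measurableSet_singleton 0) (measurableSet_singleton 0)
      rw [hAdef]
      simp only [hind, hzero i, hzero j, if_neg hij]
      rw [← ENNReal.ofReal_mul (Real.exp_nonneg _), ← Real.exp_add]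
      apply ENNReal.ofReal_le_ofReal
      rw [he2]
      apply Real.exp_le_exp.mpr
      have h1i : 1/(k:ℝ) ≤ P i := hbig i ((hmemT i).mp hi)
      have h1j : 1/(k:ℝ) ≤ P j := hbig j ((hmemT j).mp hj)
      have h2i : (n:ℝ)/k ≤ n * P i := by
        rw [div_eq_mul_one_div]; exact mul_le_mul_of_nonneg_left h1i hn0.le
      have h2j : (n:ℝ)/k ≤ n * P j := by
        rw [div_eq_mul_one_div]; exact mul_le_mul_of_nonneg_left h1j hn0.le
      have : -2*(n:ℝ)/k = -((n:ℝ)/k) + -((n:ℝ)/k) := by ring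
      rw [this]
      linarith
  -- put everything together
  calc ∑ i ∈ T, ∑ j ∈ T, ∫⁻ ω, ENNReal.ofReal (g i ω * g j ω) ∂μ
      ≤ ∑ i ∈ T, ∑ j ∈ T, ENNReal.ofReal (if i = j then e1 else e2) := by
        refine Finset.sum_le_sum (fun i hi => Finset.sum_le_sum (fun j hj => ?_))
        rw [hterm i j]
        exact hpair i hi j hj
    _ = ENNReal.ofReal (∑ i ∈ T, ∑ j ∈ T, (if i = j then e1 else e2)) := by
        rw [ENNReal.ofReal_sum_of_nonneg (fun i _ => Finset.sum_nonneg
          (fun j _ => by positivity))]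
        exact Finset.sum_congr rfl (fun i _ =>
          (ENNReal.ofReal_sum_of_nonneg (fun j _ => by positivity)).symm)
    _ ≤ ENNReal.ofReal ((k : ℝ) ^ 2 * e2 + k * e1) := by
        apply ENNReal.ofReal_le_ofReal
        have hrow : ∀ i ∈ T, (∑ j ∈ T, (if i = j then e1 else e2))
            ≤ e1 + T.card * e2 := by
          intro i hi
          calc ∑ j ∈ T, (if i = j then e1 else e2)
              ≤ ∑ j ∈ T, ((if i = j then e1 else 0) + e2) := by
                refine Finset.sum_le_sum (fun j _ => ?_)
                split <;> simp [he2pos.le, he1pos.le]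
            _ = e1 + T.card * e2 := by
                rw [Finset.sum_add_distrib, Finset.sum_ite_eq T i (fun _ => e1)]
                simp [hi, mul_comm]
        have hc0 : (0:ℝ) ≤ (T.card : ℝ) := Nat.cast_nonneg _
        calc ∑ i ∈ T, ∑ j ∈ T, (if i = j then e1 else e2)
            ≤ ∑ i ∈ T, (e1 + T.card * e2) := Finset.sum_le_sum hrow
          _ = T.card * e1 + T.card * (T.card * e2) := by
              rw [Finset.sum_const]
              ring
          _ ≤ (k : ℝ) ^ 2 * e2 + k * e1 := by
              nlinarith [mul_le_mul_of_nonneg_right hcard he1pos.le,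
                mul_le_mul_of_nonneg_right (mul_le_mul hcard hcard hc0 hk0.le) he2pos.le]
end

section
/- Let b > a ≥ 1, I = [a,b], and L a nonnegative integer. Define E*_1 as the supremum, over pairs of Borel probability measures μ, μ' supported on {0} ∪ I with ∫x dμ = ∫x dμ' = 1 and ∫x^j dμ = ∫x^j dμ' for j = 1, …, L+1, of μ'({0}) − μ({0}). Define E*_2 as the supremum, over pairs of Borel probability measures ν, ν' supported on I with ∫x^j dν = ∫x^j dν' for j = 1, …, L, of ∫(1/x) dν − ∫(1/x) dν'. Then E*_1 = E*_2. -/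
open MeasureTheory Real NNReal ENNReal

lemma fwd_aux (a b : ℝ) (ha : 1 ≤ a) (hab : a < b) (μ : Measure ℝ)
    (hp : IsProbabilityMeasure μ) (hs : μ ({0} ∪ Set.Icc a b)ᶜ = 0)
    (h1 : (∫ x, x ∂μ) = 1) :
    ∃ ν : Measure ℝ, IsProbabilityMeasure ν ∧ ν (Set.Icc a b)ᶜ = 0 ∧
      (∀ j : ℕ, (∫ x, x ^ j ∂ν) = ∫ x, x ^ (j + 1) ∂μ) ∧
      (∫ x, 1 / x ∂ν) = 1 - (μ {0}).toReal := by
  have hae : ∀ᵐ x ∂μ, x ∈ ({0} : Set ℝ) ∪ Set.Icc a b := by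
    rw [ae_iff]
    exact hs
  have hb0 : (0:ℝ) ≤ b := le_trans (by linarith) hab.le
  -- integrability of powers
  have hint : ∀ j : ℕ, Integrable (fun x => x ^ j) μ := by
    intro j
    refine (integrable_const (b ^ j)).mono' (measurable_id.pow_const j).aestronglyMeasurable ?_
    filter_upwards [hae] with x hx
    rcases hx with hx | hx
    · simp only [Set.mem_singleton_iff] at hx
      subst hx
      rcases Nat.eq_zero_or_pos j with h | h
      · simp [h]
      · rw [zero_pow h.ne', norm_zero]
        positivity
    · rw [Real.norm_eq_abs, abs_of_nonneg (pow_nonneg (by linarith [hx.1]) j)]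
      exact pow_le_pow_left₀ (by linarith [hx.1]) hx.2 j
  set ν : Measure ℝ := μ.withDensity (fun x => ENNReal.ofReal x) with hν
  have hxnn : ∀ᵐ x ∂μ, 0 ≤ x := by
    filter_upwards [hae] with x hx
    rcases hx with hx | hx
    · simp at hx; simp [hx]
    · linarith [hx.1]
  have hνuniv : ν Set.univ = 1 := by
    rw [hν, withDensity_apply _ MeasurableSet.univ, setLIntegral_univ,
      ← ofReal_integral_eq_lintegral_ofReal (by simpa using hint 1) hxnn, h1]
    simp
  have hνp : IsProbabilityMeasure ν := ⟨hνuniv⟩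
  -- integral formula wrt ν
  have key : ∀ g : ℝ → ℝ, (∫ x, g x ∂ν) = ∫ x, x * g x ∂μ := by
    intro g
    rw [hν]
    have : (fun x : ℝ => ENNReal.ofReal x) = fun x : ℝ => ((x.toNNReal : ℝ≥0) : ℝ≥0∞) := rfl
    rw [this, integral_withDensity_eq_integral_smul measurable_real_toNNReal g]
    refine integral_congr_ae ?_
    filter_upwards [hxnn] with x hx
    simp [NNReal.smul_def, Real.coe_toNNReal x hx]
  refine ⟨ν, hνp, ?_, ?_, ?_⟩
  · have h0 : ν ({0} : Set ℝ) = 0 := by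
      rw [hν, withDensity_apply _ (measurableSet_singleton 0), lintegral_singleton]
      simp
    have hcs : ν ({0} ∪ Set.Icc a b)ᶜ = 0 := (withDensity_absolutelyContinuous μ _) hs
    have : (Set.Icc a b)ᶜ ⊆ (({0} : Set ℝ) ∪ Set.Icc a b)ᶜ ∪ {0} := by
      intro x hx
      by_cases hx0 : x = 0
      · exact Or.inr hx0
      · left; simp_all
    have hle := (measure_mono (μ := ν) this).trans (measure_union_le _ _)
    rw [hcs, h0, add_zero] at hle
    exact le_antisymm hle zero_le
  · intro j
    rw [key]
    refine integral_congr_ae (Filter.Eventually.of_forall fun x => ?_)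
    ring
  · rw [key]
    have : (fun x : ℝ => x * (1 / x)) =ᶠ[ae μ] Set.indicator ({0}ᶜ : Set ℝ) (fun _ => (1:ℝ)) := by
      filter_upwards [hae] with x hx
      rcases hx with hx | hx
      · simp at hx; simp [hx]
      · have hx0 : x ≠ 0 := by intro h; rw [h] at hx; linarith [hx.1]
        simp [hx0, Set.indicator_of_mem, mul_one_div, div_self hx0]
    rw [integral_congr_ae this, integral_indicator_const (1:ℝ) (measurableSet_singleton (0:ℝ)).compl]
    rw [measureReal_def, measure_compl (measurableSet_singleton 0) (measure_ne_top μ _), hp.measure_univ]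
    rw [ENNReal.toReal_sub_of_le prob_le_one ENNReal.one_ne_top]
    simp

lemma bwd_aux (a b : ℝ) (ha : 1 ≤ a) (hab : a < b) (ν : Measure ℝ)
    (hp : IsProbabilityMeasure ν) (hs : ν (Set.Icc a b)ᶜ = 0) :
    ∃ μ : Measure ℝ, IsProbabilityMeasure μ ∧ μ ({0} ∪ Set.Icc a b)ᶜ = 0 ∧
      (∀ j : ℕ, (∫ x, x ^ (j + 1) ∂μ) = ∫ x, x ^ j ∂ν) ∧
      (μ {0}).toReal = 1 - ∫ x, 1 / x ∂ν := by
  have hae : ∀ᵐ x ∂ν, x ∈ Set.Icc a b := by rw [ae_iff]; exact hs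
  have hb0 : (0:ℝ) ≤ b := le_trans (by linarith) hab.le
  -- integrability of 1/x and products
  have hbd : ∀ᵐ x ∂ν, |1 / x| ≤ 1 := by
    filter_upwards [hae] with x hx
    have hx1 : 1 ≤ x := le_trans ha hx.1
    rw [abs_of_nonneg (by positivity)]
    rw [div_le_one (by linarith)]; linarith
  have hmeas : Measurable (fun x : ℝ => 1 / x) := measurable_one.div measurable_id
  have hint : Integrable (fun x => 1 / x) ν := by
    refine (integrable_const (1:ℝ)).mono' hmeas.aestronglyMeasurable ?_
    filter_upwards [hbd] with x hx
    rw [Real.norm_eq_abs]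
    exact hx
  set I : ℝ := ∫ x, 1 / x ∂ν with hI
  have hInn : ∀ᵐ x ∂ν, 0 ≤ 1 / x := by
    filter_upwards [hae] with x hx
    have : (0:ℝ) < x := by linarith [hx.1]
    positivity
  have hI0 : 0 ≤ I := integral_nonneg_of_ae hInn
  have hI1 : I ≤ 1 := by
    calc I ≤ ∫ _x, (1:ℝ) ∂ν := by
              refine integral_mono_ae hint (integrable_const 1) ?_
              filter_upwards [hbd] with x hx
              exact (abs_le.mp hx).2
    _ = 1 := by simp
  set wd : Measure ℝ := ν.withDensity (fun x => ENNReal.ofReal (1 / x)) with hwd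
  have hwduniv : wd Set.univ = ENNReal.ofReal I := by
    rw [hwd, withDensity_apply _ MeasurableSet.univ, setLIntegral_univ,
      ← ofReal_integral_eq_lintegral_ofReal hint hInn]
  set c : ℝ≥0∞ := 1 - ENNReal.ofReal I with hc
  have hcle : ENNReal.ofReal I ≤ 1 := by
    rw [← ENNReal.ofReal_one]; exact ENNReal.ofReal_le_ofReal hI1
  set μ : Measure ℝ := c • Measure.dirac 0 + wd with hμ
  have hν0 : ν ({0} : Set ℝ) = 0 := by
    refine measure_mono_null ?_ hs
    intro x hx
    simp only [Set.mem_singleton_iff] at hx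
    subst hx
    simp [Set.mem_Icc]; intro h; linarith
  have hwd0 : wd ({0} : Set ℝ) = 0 := (withDensity_absolutelyContinuous ν _) hν0
  have hμ0 : μ ({0} : Set ℝ) = c := by
    rw [hμ, Measure.add_apply, Measure.smul_apply, Measure.dirac_apply_of_mem (Set.mem_singleton (0:ℝ)), hwd0]
    simp
  have hμuniv : μ Set.univ = 1 := by
    rw [hμ, Measure.add_apply, Measure.smul_apply, hwduniv]
    simp only [measure_univ, smul_eq_mul, mul_one]
    rw [hc, tsub_add_cancel_of_le hcle]
  -- integral formula wrt wd
  have key : ∀ g : ℝ → ℝ, (∫ x, g x ∂wd) = ∫ x, (1 / x) * g x ∂ν := by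
    intro g
    rw [hwd]
    have : (fun x : ℝ => ENNReal.ofReal (1 / x)) = fun x : ℝ => (((1 / x).toNNReal : ℝ≥0) : ℝ≥0∞) := rfl
    rw [this, integral_withDensity_eq_integral_smul (hmeas.real_toNNReal) g]
    refine integral_congr_ae ?_
    filter_upwards [hInn] with x hx
    simp only [NNReal.smul_def, smul_eq_mul]
    rw [Real.coe_toNNReal _ hx]
  -- integrability wrt smul dirac
  have hintd : ∀ g : ℝ → ℝ, Measurable g → Integrable g (c • Measure.dirac (0:ℝ)) := by
    intro g hg
    refine Integrable.smul_measure ?_ (by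
      rw [hc]; exact (tsub_le_self.trans_lt ENNReal.one_lt_top).ne)
    exact (integrable_const (g 0)).congr (ae_eq_dirac g).symm
  have hwdfin : IsFiniteMeasure wd := ⟨by rw [hwduniv]; exact ENNReal.ofReal_lt_top⟩
  have hwdae : ∀ᵐ x ∂wd, x ∈ Set.Icc a b := by
    rw [ae_iff]
    exact (withDensity_absolutelyContinuous ν _) hs
  have hintwd : ∀ j : ℕ, Integrable (fun x => x ^ j) wd := by
    intro j
    refine (integrable_const (b ^ j)).mono' (measurable_id.pow_const j).aestronglyMeasurable ?_
    filter_upwards [hwdae] with x hx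
    rw [Real.norm_eq_abs, abs_of_nonneg (pow_nonneg (by linarith [hx.1]) j)]
    exact pow_le_pow_left₀ (by linarith [hx.1]) hx.2 j
  refine ⟨μ, ⟨hμuniv⟩, ?_, ?_, ?_⟩
  · rw [hμ, Measure.add_apply, Measure.smul_apply]
    have h1 : (Measure.dirac (0:ℝ)) (({0} ∪ Set.Icc a b)ᶜ) = 0 := by
      rw [Measure.dirac_apply' _ ((measurableSet_singleton (0:ℝ)).union measurableSet_Icc).compl]
      simp
    have h2 : wd (({0} ∪ Set.Icc a b)ᶜ) = 0 := by
      refine measure_mono_null ?_ ((withDensity_absolutelyContinuous ν _) hs)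
      exact Set.compl_subset_compl.mpr Set.subset_union_right
    rw [h1, h2]
    simp
  · intro j
    rw [hμ, integral_add_measure (hintd (fun x => x ^ (j+1)) ((measurable_id.pow_const (j+1)) : Measurable fun x : ℝ => x ^ (j+1))) (hintwd (j+1)),
      integral_smul_measure, integral_dirac, key]
    rw [zero_pow (Nat.succ_ne_zero j)]
    simp only [smul_eq_mul, mul_zero, zero_add]
    refine integral_congr_ae ?_
    filter_upwards [hae] with x hx
    have hx0 : x ≠ 0 := by intro h; rw [h] at hx; linarith [hx.1]
    rw [pow_succ]
    field_simp
  · rw [hμ0, hc, ENNReal.toReal_sub_of_le hcle ENNReal.one_ne_top,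
      ENNReal.toReal_ofReal hI0, ENNReal.toReal_one]


theorem stmt10 (a b : ℝ) (ha : 1 ≤ a) (hab : a < b) (L : ℕ) :
    sSup {d : ℝ | ∃ μ μ' : Measure ℝ,
        IsProbabilityMeasure μ ∧ IsProbabilityMeasure μ' ∧
        μ ({0} ∪ Set.Icc a b)ᶜ = 0 ∧ μ' ({0} ∪ Set.Icc a b)ᶜ = 0 ∧
        (∫ x, x ∂μ) = 1 ∧ (∫ x, x ∂μ') = 1 ∧
        (∀ j : ℕ, 1 ≤ j → j ≤ L + 1 → (∫ x, x ^ j ∂μ) = ∫ x, x ^ j ∂μ') ∧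
        d = (μ' {0}).toReal - (μ {0}).toReal}
      = sSup {d : ℝ | ∃ ν ν' : Measure ℝ,
          IsProbabilityMeasure ν ∧ IsProbabilityMeasure ν' ∧
          ν (Set.Icc a b)ᶜ = 0 ∧ ν' (Set.Icc a b)ᶜ = 0 ∧
          (∀ j : ℕ, 1 ≤ j → j ≤ L → (∫ x, x ^ j ∂ν) = ∫ x, x ^ j ∂ν') ∧
          d = (∫ x, 1 / x ∂ν) - ∫ x, 1 / x ∂ν'} := by
  congr 1
  ext d
  simp only [Set.mem_setOf_eq]
  constructor
  · rintro ⟨μ, μ', hμp, hμ'p, hμs, hμ's, hμ1, hμ'1, hmom, rfl⟩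
    obtain ⟨ν, hνp, hνs, hνmom, hνinv⟩ := fwd_aux a b ha hab μ hμp hμs hμ1
    obtain ⟨ν', hν'p, hν's, hν'mom, hν'inv⟩ := fwd_aux a b ha hab μ' hμ'p hμ's hμ'1
    refine ⟨ν, ν', hνp, hν'p, hνs, hν's, ?_, ?_⟩
    · intro j hj1 hjL
      rw [hνmom j, hν'mom j, hmom (j + 1) (by omega) (by omega)]
    · rw [hνinv, hν'inv]; ring
  · rintro ⟨ν, ν', hνp, hν'p, hνs, hν's, hmom, rfl⟩
    obtain ⟨μ, hμp, hμs, hμmom, hμ0⟩ := bwd_aux a b ha hab ν hνp hνs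
    obtain ⟨μ', hμ'p, hμ's, hμ'mom, hμ'0⟩ := bwd_aux a b ha hab ν' hν'p hν's
    refine ⟨μ, μ', hμp, hμ'p, hμs, hμ's, by simpa using hμmom 0, by simpa using hμ'mom 0, ?_, ?_⟩
    · intro j hj1 hjL
      cases j with
      | zero => omega
      | succ k =>
        rw [hμmom k, hμ'mom k]
        rcases Nat.eq_zero_or_pos k with hk | hk
        · subst hk; simp
        · exact hmom k hk (by omega)
    · rw [hμ0, hμ'0]; ring
end

section
/- Consider an urn with k balls, k_i of color i (k_i ∈ ℤ≥0, Σ_i k_i = k), S = #{i : k_i > 0}, and p_i = k_i/k. Assume Poisson sampling: N_i independent with N_i ~ Poisson(n·p_i). Let L = α·log k and M = β·k·log k / n be integers with β > α > 0. Given w = (w_1,…,w_L) ∈ ℝ^L, set u_j = w_j·j!·(k/(nM))^j for j ∈ {1,…,L} and u_j = 0 otherwise; let Ŝ = Σ_i g(N_i) with g(0) = 0 and g(j) = 1 + u_j for j ≥ 1; let Ŝ_plug = Σ_i 1{N_i > 0} and S̃ = min(max(Ŝ, Ŝ_plug), k). Let B be the M × L matrix with entries B_{m,j} = (m/M)^j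 and 1 the all-ones vector in ℝ^M. Then E(S̃ − S)² ≤ k²·e^{−2n/k}·‖Bw − 1‖_∞² + k·e^{−n/k} + k·max_{m ∈ {1,…,M}} E_{N ~ Poisson(nm/k)}[u_N²] + k^{−(β − α·log(eβ/α) − 3)}. -/
open MeasureTheory ProbabilityTheory Real ENNReal

-- clamp lemma
lemma clamp_sq_le {a b s x : ℝ} (h1 : a ≤ s) (h2 : s ≤ b) :
    (min (max x a) b - s) ^ 2 ≤ (x - s) ^ 2 := by
  rcases le_total x a with h | h
  · rcases le_total a b with hab | hab
    · rw [max_eq_right h, min_eq_left hab]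
      nlinarith [sub_nonneg.2 h1]
    · rw [max_eq_right h, min_eq_right hab]
      nlinarith
  · rw [max_eq_left h]
    rcases le_total x b with hxb | hxb
    · rw [min_eq_left hxb]
    · rw [min_eq_right hxb]
      nlinarith

-- Chernoff-type sum bound
lemma sum_pow_div_factorial_le {lam : ℝ} {L : ℕ} (hL : 1 ≤ L) (h : (L : ℝ) ≤ lam) :
    ∑ j ∈ Finset.Iic L, lam ^ j / (Nat.factorial j) ≤ (lam / L) ^ L * Real.exp L := by
  have hL0 : (0:ℝ) < L := by positivity
  have hlam0 : 0 < lam := lt_of_lt_of_le hL0 h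
  have key : ∀ j ∈ Finset.Iic L, lam ^ j / (Nat.factorial j)
      ≤ (lam / L) ^ L * ((L:ℝ) ^ j / (Nat.factorial j)) := by
    intro j hj
    rw [Finset.mem_Iic] at hj
    have hfac : (0:ℝ) < (Nat.factorial j) := by positivity
    rw [div_le_iff₀ hfac] at *
    have : lam ^ j * (L:ℝ) ^ (L - j) ≤ lam ^ L := by
      calc lam ^ j * (L:ℝ) ^ (L - j) ≤ lam ^ j * lam ^ (L - j) := by
            gcongr
          _ = lam ^ L := by rw [← pow_add]; congr 1; omega
    calc lam ^ j = lam ^ j * (L:ℝ) ^ (L - j) * (L:ℝ)^j / (L:ℝ)^L := by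
          rw [mul_assoc, ← pow_add]
          have : L - j + j = L := by omega
          rw [this]
          field_simp
        _ ≤ lam ^ L * (L:ℝ)^j / (L:ℝ)^L := by gcongr
        _ = (lam / L) ^ L * (L:ℝ) ^ j := by rw [div_pow]; ring
        _ = (lam / L) ^ L * ((L:ℝ) ^ j / ↑(Nat.factorial j)) * ↑(Nat.factorial j) := by
          field_simp
  calc ∑ j ∈ Finset.Iic L, lam ^ j / (Nat.factorial j)
      ≤ ∑ j ∈ Finset.Iic L, (lam / L) ^ L * ((L:ℝ) ^ j / (Nat.factorial j)) :=
        Finset.sum_le_sum key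
    _ = (lam / L) ^ L * ∑ j ∈ Finset.Iic L, ((L:ℝ) ^ j / (Nat.factorial j)) := by
        rw [Finset.mul_sum]
    _ ≤ (lam / L) ^ L * Real.exp L := by
        have h1 : ∑ j ∈ Finset.Iic L, ((L:ℝ) ^ j / (Nat.factorial j)) ≤ Real.exp L := by
          have := Real.sum_le_exp_of_nonneg (le_of_lt hL0) (L+1)
          have hr : Finset.Iic L = Finset.range (L+1) := by
            ext x; simp [Nat.lt_succ_iff]
          rwa [hr]
        have h2 : (0:ℝ) ≤ (lam / L) ^ L := by positivity
        exact mul_le_mul_of_nonneg_left h1 h2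

-- monotonicity of the tail bound
lemma tail_mono {L : ℕ} {a b : ℝ} (hL : 1 ≤ L) (hLa : (L:ℝ) ≤ a) (hab : a ≤ b) :
    Real.exp (-b) * (b / L) ^ L ≤ Real.exp (-a) * (a / L) ^ L := by
  have hL0 : (0:ℝ) < L := by positivity
  have ha0 : 0 < a := lt_of_lt_of_le hL0 hLa
  have hb0 : 0 < b := lt_of_lt_of_le ha0 hab
  have key : (b / a) ^ L ≤ Real.exp (b - a) := by
    have h1 : b / a ≤ Real.exp (b / a - 1) := by
      have := Real.add_one_le_exp (b / a - 1)
      linarith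
    have h2 : (b / a) ^ L ≤ Real.exp (b / a - 1) ^ L :=
      pow_le_pow_left₀ (by positivity) h1 L
    rw [← Real.exp_nat_mul] at h2
    refine h2.trans (Real.exp_le_exp.2 ?_)
    have h3 : (0:ℝ) ≤ b / a - 1 := by
      rw [sub_nonneg, le_div_iff₀ ha0]; linarith
    calc (L:ℝ) * (b / a - 1) ≤ a * (b / a - 1) := by gcongr
      _ = b - a := by field_simp
  have hexp : Real.exp (-b) * Real.exp (b - a) = Real.exp (-a) := by
    rw [← Real.exp_add]; ring_nf
  calc Real.exp (-b) * (b / L) ^ L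
      = Real.exp (-b) * ((b/a) ^ L * (a / L) ^ L) := by
        rw [← mul_pow]
        congr 2
        field_simp
    _ ≤ Real.exp (-b) * (Real.exp (b - a) * (a / L) ^ L) := by
        refine mul_le_mul_of_nonneg_left ?_ (Real.exp_pos _).le
        exact mul_le_mul_of_nonneg_right key (by positivity)
    _ = Real.exp (-a) * (a / L) ^ L := by rw [← mul_assoc, hexp]

-- integral of a finitely supported function against the Poisson measure
lemma integral_poisson_eq_sum (r : NNReal) (f : ℕ → ℝ) (L : ℕ) (hf : ∀ j, L < j → f j = 0) :
    ∫ x, f x ∂(poissonMeasure r)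
      = ∑ j ∈ Finset.Iic L, poissonPMFReal r j * f j := by
  have hrepr : f = fun x => ∑ j ∈ Finset.Iic L,
      Set.indicator ({j} : Set ℕ) (fun _ => f j) x := by
    ext x
    by_cases hx : x ≤ L
    · rw [Finset.sum_eq_single x]
      · simp
      · intro j _ hj
        simp [Set.indicator_of_notMem, Set.mem_singleton_iff, (Ne.symm hj)]
      · intro hmem
        exact absurd (Finset.mem_Iic.2 hx) hmem
    · push_neg at hx
      rw [hf x hx]
      symm
      apply Finset.sum_eq_zero
      intro j hj
      rw [Finset.mem_Iic] at hj
      have : x ≠ j := by omega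
      simp [Set.indicator_of_notMem, Set.mem_singleton_iff, this]
  conv_lhs => rw [hrepr]
  rw [integral_finset_sum]
  · apply Finset.sum_congr rfl
    intro j _
    rw [integral_indicator_const _ (measurableSet_singleton j)]
    have hsing : (poissonMeasure r) {j} = ENNReal.ofReal (poissonPMFReal r j) :=
      poissonMeasure_singleton _ j
    rw [measureReal_def, hsing, smul_eq_mul, ENNReal.toReal_ofReal poissonPMFReal_nonneg, mul_comm]
  · intro j _
    rw [integrable_indicator_iff (measurableSet_singleton j)]
    exact integrableOn_const (measure_lt_top _ _).ne

-- measure of an initial segment under Poisson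
lemma poisson_Iic (r : NNReal) (L : ℕ) :
    poissonMeasure r (Set.Iic L)
      = ENNReal.ofReal (∑ j ∈ Finset.Iic L, poissonPMFReal r j) := by
  rw [← Finset.coe_Iic, ← sum_measure_singleton,
    ENNReal.ofReal_sum_of_nonneg (fun j _ => poissonPMFReal_nonneg)]
  exact Finset.sum_congr rfl (fun j _ => poissonMeasure_singleton _ j)

set_option maxHeartbeats 1000000 in
theorem stmt11 (k n : ℕ) (hk : 1 ≤ k) (hn : 1 ≤ n)
    (kball : ℕ → ℕ) (hsum : HasSum (fun i => (kball i : ℝ)) k)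
    (L M : ℕ) (α β : ℝ) (hα : 0 < α) (hαβ : α < β)
    (hL : (L : ℝ) = α * Real.log k) (hM : (M : ℝ) = β * k * Real.log k / n)
    (w : ℕ → ℝ)
    {Ω : Type*} [MeasurableSpace Ω] (μ : Measure Ω) [IsProbabilityMeasure μ]
    (N : ℕ → Ω → ℕ) (hmeas : ∀ i, Measurable (N i))
    (hindep : iIndepFun N μ)
    (hlaw : ∀ i, μ.map (N i) = poissonMeasure (Real.toNNReal ((n : ℝ) * kball i / k)))
    -- the coefficients `u_j` and the function `g`
    (u : ℕ → ℝ) (hu : ∀ j, u j = if 1 ≤ j ∧ j ≤ L then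
      w j * (Nat.factorial j) * ((k : ℝ) / ((n : ℝ) * M)) ^ j else 0)
    (g : ℕ → ℝ) (hg0 : g 0 = 0) (hg : ∀ j, 1 ≤ j → g j = 1 + u j)
    -- the estimators
    (Shat Splug Stilde : Ω → ℝ)
    (hShat : ∀ ω, Shat ω = ∑' i, g (N i ω))
    (hSplug : ∀ ω, Splug ω = ∑' i, if 0 < N i ω then (1 : ℝ) else 0)
    (hStilde : ∀ ω, Stilde ω = min (max (Shat ω) (Splug ω)) (k : ℝ)) :
    (∫⁻ ω, ENNReal.ofReal
        ((Stilde ω - (Set.ncard {i | kball i ≠ 0} : ℝ)) ^ 2) ∂μ)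
      ≤ ENNReal.ofReal ((k : ℝ) ^ 2 * exp (-2 * n / k) *
            (⨆ m ∈ Finset.Icc 1 M,
              |(∑ j ∈ Finset.Icc 1 L, w j * ((m : ℝ) / M) ^ j) - 1|) ^ 2)
        + ENNReal.ofReal ((k : ℝ) * exp (-(n : ℝ) / k))
        + (k : ℝ≥0∞) * ⨆ m ∈ Finset.Icc 1 M,
            ∫⁻ x, ENNReal.ofReal ((u x) ^ 2)
              ∂(poissonMeasure (Real.toNNReal ((n : ℝ) * m / k)))
        + ENNReal.ofReal ((k : ℝ) ^ (-(β - α * Real.log (Real.exp 1 * β / α) - 3))) := by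
  have hk0 : (0:ℝ) < k := by exact_mod_cast hk
  have hn0 : (0:ℝ) < n := by exact_mod_cast hn
  -- the support is finite
  have hfin : {i | kball i ≠ 0}.Finite := by
    have h1 : ∀ᶠ i in Filter.cofinite, |(kball i : ℝ)| < 1 := by
      have h2 := Metric.tendsto_nhds.1 hsum.summable.tendsto_cofinite_zero 1 one_pos
      simpa [Real.dist_eq] using h2
    have h3 : {i | ¬ |(kball i : ℝ)| < 1}.Finite := Filter.eventually_cofinite.mp h1
    refine h3.subset ?_
    intro i hi
    simp only [Set.mem_setOf_eq, not_lt] at *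
    have : (1:ℝ) ≤ (kball i : ℝ) := by exact_mod_cast Nat.one_le_iff_ne_zero.2 hi
    calc (1:ℝ) ≤ (kball i : ℝ) := this
      _ ≤ |(kball i : ℝ)| := le_abs_self _
  set T : Finset ℕ := hfin.toFinset with hT
  have hmemT : ∀ i, i ∈ T ↔ kball i ≠ 0 := fun i => hfin.mem_toFinset
  have hsumT : ∑ i ∈ T, (kball i : ℝ) = k := by
    rw [← hsum.tsum_eq]
    exact (tsum_eq_sum (fun i hi => by
      simp only [hmemT, not_not] at hi
      rw [hi]; norm_num)).symm
  have hSr : ((Set.ncard {i | kball i ≠ 0} : ℕ) : ℝ) = (T.card : ℝ) := by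
    norm_cast
    rw [Set.ncard_eq_toFinset_card _ hfin]
  have hcardT : (T.card : ℝ) ≤ k := by
    calc (T.card : ℝ) = ∑ _i ∈ T, (1:ℝ) := by simp
      _ ≤ ∑ i ∈ T, (kball i : ℝ) := by
          refine Finset.sum_le_sum (fun i hi => ?_)
          exact_mod_cast Nat.one_le_iff_ne_zero.2 ((hmemT i).1 hi)
      _ = k := hsumT
  simp only [hSr]
  -- pointwise bounds on the estimator
  have hSplug0 : ∀ ω, 0 ≤ Splug ω := by
    intro ω
    rw [hSplug ω]
    refine tsum_nonneg (fun i => ?_)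
    split <;> norm_num
  have hSt0 : ∀ ω, 0 ≤ Stilde ω := by
    intro ω
    rw [hStilde ω]
    exact le_min ((hSplug0 ω).trans (le_max_right _ _)) hk0.le
  have hStk : ∀ ω, Stilde ω ≤ (k:ℝ) := fun ω => by rw [hStilde ω]; exact min_le_right _ _
  have hT0 : (0:ℝ) ≤ (T.card : ℝ) := by positivity
  -- a.e. the colors outside the support give N = 0
  have hG : ∀ᵐ ω ∂μ, ∀ i, i ∉ T → N i ω = 0 := by
    rw [ae_all_iff]
    intro i
    by_cases hi : i ∈ T
    · exact ae_of_all _ (fun ω h => absurd hi h)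
    · have hkb : kball i = 0 := by
        by_contra h
        exact hi ((hmemT i).2 h)
      have h1 : μ.map (N i) {0} = 1 := by
        rw [hlaw i, hkb]
        have h0 : Real.toNNReal ((n : ℝ) * ((0:ℕ):ℝ) / k) = 0 := by norm_num
        rw [h0, poissonMeasure_singleton]
        show ENNReal.ofReal (poissonPMFReal 0 0) = 1
        unfold poissonPMFReal
        simp
      have h2 : μ {ω | N i ω = 0} = 1 := by
        rw [Measure.map_apply (hmeas i) (measurableSet_singleton 0)] at h1
        exact h1
      have h4 : ∀ᵐ ω ∂μ, N i ω = 0 := by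
        rw [MeasureTheory.ae_iff]
        have he : {ω | ¬ N i ω = 0} = {ω | N i ω = 0}ᶜ := by ext ω; simp
        have hms : MeasurableSet {ω | N i ω = 0} := (hmeas i) (measurableSet_singleton 0)
        rw [he, measure_compl hms (measure_ne_top _ _), h2]
        simp
      filter_upwards [h4] with ω hω
      exact fun _ => hω
  -- trivial-ish case k = 1
  rcases eq_or_lt_of_le hk with hk1 | hk2
  · have hk1' : (k:ℝ) = 1 := by rw [← hk1]; norm_num
    have hL0' : L = 0 := by
      have h : (L:ℝ) = 0 := by rw [hL, hk1']; simp
      exact_mod_cast h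
    have hu' : ∀ j, u j = 0 := fun j => by rw [hu j, if_neg (by omega)]
    have hTne : T.Nonempty := by
      by_contra h
      rw [Finset.not_nonempty_iff_eq_empty] at h
      rw [h, Finset.sum_empty] at hsumT
      rw [← hsumT] at hk0
      exact lt_irrefl _ hk0
    have hTcard : T.card = 1 := by
      have hle : (T.card:ℝ) ≤ 1 := by rw [← hk1']; exact hcardT
      have h1 : T.card ≤ 1 := by exact_mod_cast hle
      have h2 := Finset.card_pos.2 hTne
      omega
    obtain ⟨i0, hi0⟩ := Finset.card_eq_one.1 hTcard
    have hkb0 : kball i0 = 1 := by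
      have h1 := hsumT
      rw [hi0, Finset.sum_singleton, hk1'] at h1
      exact_mod_cast h1
    have hkey : ∀ᵐ ω ∂μ, ENNReal.ofReal ((Stilde ω - (T.card:ℝ)) ^ 2)
        ≤ Set.indicator {ω' | N i0 ω' = 0} (fun _ => 1) ω := by
      filter_upwards [hG] with ω hω
      by_cases hN : N i0 ω = 0
      · rw [Set.indicator_of_mem (show ω ∈ {ω' | N i0 ω' = 0} from hN) (fun _ => (1:ℝ≥0∞)), ← ENNReal.ofReal_one]
        apply ENNReal.ofReal_le_ofReal
        have h1 : (T.card:ℝ) = 1 := by rw [hTcard]; norm_num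
        rw [h1]
        nlinarith [hSt0 ω, hStk ω, hk1']
      · rw [Set.indicator_of_notMem (show ω ∉ {ω' | N i0 ω' = 0} from hN) (fun _ => (1:ℝ≥0∞))]
        have hout : ∀ i, i ∉ T → g (N i ω) = 0 := fun i hi => by rw [hω i hi, hg0]
        have hShat' : Shat ω = 1 := by
          rw [hShat ω, tsum_eq_sum (s := T) hout, hi0, Finset.sum_singleton,
            hg _ (by omega), hu', add_zero]
        have hSplug' : Splug ω = 1 := by
          have hout2 : ∀ i, i ∉ T → (if 0 < N i ω then (1:ℝ) else 0) = 0 := by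
            intro i hi; rw [hω i hi]; simp
          rw [hSplug ω, tsum_eq_sum (s := T) hout2, hi0, Finset.sum_singleton,
            if_pos (by omega)]
        have hSt : Stilde ω = 1 := by
          rw [hStilde ω, hShat', hSplug', hk1']; simp
        rw [hSt, hTcard]
        norm_num
    have hμ0 : μ {ω' | N i0 ω' = 0} ≤ ENNReal.ofReal (Real.exp (-(n:ℝ))) := by
      have he : {ω' | N i0 ω' = 0} = N i0 ⁻¹' {0} := rfl
      rw [he, ← Measure.map_apply (hmeas i0) (measurableSet_singleton 0), hlaw i0, hkb0,
        poissonMeasure_singleton]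
      show ENNReal.ofReal (poissonPMFReal _ 0) ≤ _
      apply ENNReal.ofReal_le_ofReal
      unfold poissonPMFReal
      rw [Real.coe_toNNReal _ (by positivity)]
      rw [hk1']
      norm_num
    have hmain : (∫⁻ ω, ENNReal.ofReal ((Stilde ω - (T.card:ℝ)) ^ 2) ∂μ)
        ≤ ENNReal.ofReal ((k : ℝ) * Real.exp (-(n : ℝ) / k)) := by
      calc (∫⁻ ω, ENNReal.ofReal ((Stilde ω - (T.card:ℝ)) ^ 2) ∂μ)
          ≤ ∫⁻ ω, Set.indicator {ω' | N i0 ω' = 0} (fun _ => 1) ω ∂μ :=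
            lintegral_mono_ae hkey
        _ = μ {ω' | N i0 ω' = 0} := by
            have hms0 : MeasurableSet {ω' | N i0 ω' = 0} := (hmeas i0) (measurableSet_singleton 0)
            rw [lintegral_indicator hms0, setLIntegral_const, one_mul]
        _ ≤ ENNReal.ofReal (Real.exp (-(n:ℝ))) := hμ0
        _ = ENNReal.ofReal ((k : ℝ) * Real.exp (-(n : ℝ) / k)) := by
            rw [hk1']
            norm_num
    refine hmain.trans ?_
    calc ENNReal.ofReal ((k : ℝ) * Real.exp (-(n : ℝ) / k))
        ≤ _ + ENNReal.ofReal ((k : ℝ) * Real.exp (-(n : ℝ) / k)) := le_add_self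
      _ ≤ _ := le_self_add
  -- main case k ≥ 2
  have hlogk : 0 < Real.log k := Real.log_pos (by exact_mod_cast hk2)
  have hβ0 : 0 < β := hα.trans hαβ
  have hL1 : 1 ≤ L := by
    by_contra hcon
    push_neg at hcon
    interval_cases L
    rw [Nat.cast_zero] at hL
    have h2 : (0:ℝ) < α * Real.log k := mul_pos hα hlogk
    rw [← hL] at h2
    exact lt_irrefl _ h2
  have hM1 : 1 ≤ M := by
    by_contra hcon
    push_neg at hcon
    interval_cases M
    rw [Nat.cast_zero] at hM
    have h2 : (0:ℝ) < β * k * Real.log k / n := by positivity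
    rw [← hM] at h2
    exact lt_irrefl _ h2
  have hM0 : (0:ℝ) < M := by exact_mod_cast hM1
  have hnMk : (n:ℝ) * M / k = β * Real.log k := by
    rw [hM]; field_simp
  have hLr : (L:ℝ) ≤ β * Real.log k := by
    rw [hL]
    have := hlogk.le
    nlinarith
  have hlamcoe : ∀ i : ℕ, ((Real.toNNReal ((n:ℝ) * kball i / k) : NNReal) : ℝ)
      = (n:ℝ) * kball i / k := fun i => Real.coe_toNNReal _ (by positivity)
  set A : Finset ℕ := T.filter (fun i => kball i ≤ M) with hA
  set C : Finset ℕ := T.filter (fun i => ¬ kball i ≤ M) with hC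
  -- basic coefficient facts
  have hu0 : u 0 = 0 := by rw [hu 0]; simp
  have huL : ∀ j, L < j → u j = 0 := by
    intro j hj
    rw [hu j, if_neg]
    omega
  set φ : ℕ → ℝ := fun j => u j - (if j = 0 then 1 else 0) with hφdef
  have hgφ : ∀ j, g j - 1 = φ j := by
    intro j
    cases j with
    | zero => simp [hg0, hφdef, hu0]
    | succ m => rw [hg (m+1) (by omega)]; simp [hφdef]
  have hφsq : ∀ j, (φ j)^2 = (u j)^2 + (if j = 0 then 1 else 0) := by
    intro j
    cases j with
    | zero => simp [hφdef, hu0]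
    | succ m => simp [hφdef]
  have hφL : ∀ j, L < j → φ j = 0 := by
    intro j hj
    simp only [hφdef, huL j hj]
    rw [if_neg (by omega)]
    norm_num
  -- uniform bound on φ
  set Cb : ℝ := (∑ j ∈ Finset.Iic L, |u j|) + 1 with hCbdef
  have hCb0 : 0 ≤ Cb := by
    rw [hCbdef]
    have : 0 ≤ ∑ j ∈ Finset.Iic L, |u j| := Finset.sum_nonneg (fun j _ => abs_nonneg _)
    linarith
  have hφbd : ∀ j, |φ j| ≤ Cb := by
    intro j
    have h1 : |u j| ≤ ∑ j' ∈ Finset.Iic L, |u j'| := by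
      by_cases hj : j ≤ L
      · exact Finset.single_le_sum (f := fun j' => |u j'|) (fun j' _ => abs_nonneg _) (Finset.mem_Iic.2 hj)
      · push_neg at hj
        rw [huL j hj, abs_zero]
        exact Finset.sum_nonneg fun j' _ => abs_nonneg _
    have h2 : |φ j| ≤ |u j| + 1 := by
      rw [hφdef]
      refine (abs_sub _ _).trans ?_
      gcongr
      split <;> simp
    rw [hCbdef]
    linarith
  -- the random variables X i
  set X : ℕ → Ω → ℝ := fun i ω => φ (N i ω) with hXdef
  have hXmeas : ∀ i, Measurable (X i) := by
    intro i
    show Measurable fun ω => φ (N i ω)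
    exact (measurable_from_top : Measurable φ).comp (hmeas i)
  have hXbd : ∀ i ω, |X i ω| ≤ Cb := fun i ω => hφbd _
  have hXint : ∀ i, Integrable (X i) μ := by
    intro i
    refine Integrable.mono' (integrable_const Cb) (hXmeas i).aestronglyMeasurable ?_
    exact ae_of_all _ (fun ω => by rw [Real.norm_eq_abs]; exact hXbd i ω)
  have hXXint : ∀ i j, Integrable (fun ω => X i ω * X j ω) μ := by
    intro i j
    refine Integrable.mono' (integrable_const (Cb * Cb))
      ((hXmeas i).mul (hXmeas j)).aestronglyMeasurable ?_
    refine ae_of_all _ (fun ω => ?_)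
    rw [Real.norm_eq_abs, abs_mul]
    exact mul_le_mul (hXbd i ω) (hXbd j ω) (abs_nonneg _) hCb0
  set Y : Ω → ℝ := fun ω => ∑ i ∈ A, X i ω with hYdef
  have hYmeas : Measurable Y := Finset.measurable_sum _ (fun i _ => hXmeas i)
  have hYbd : ∀ ω, |Y ω| ≤ (A.card : ℝ) * Cb := by
    intro ω
    calc |Y ω| ≤ ∑ i ∈ A, |X i ω| := Finset.abs_sum_le_sum_abs _ _
      _ ≤ ∑ _i ∈ A, Cb := Finset.sum_le_sum (fun i _ => hXbd i ω)
      _ = (A.card : ℝ) * Cb := by rw [Finset.sum_const, nsmul_eq_mul]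
  have hY2int : Integrable (fun ω => (Y ω)^2) μ := by
    refine Integrable.mono' (integrable_const (((A.card : ℝ) * Cb)^2))
      ((hYmeas.pow_const 2).aestronglyMeasurable) ?_
    refine ae_of_all _ (fun ω => ?_)
    rw [Real.norm_eq_abs, abs_pow]
    have h1 := hYbd ω
    have h0 : (0:ℝ) ≤ |Y ω| := abs_nonneg _
    calc |Y ω| ^ 2 ≤ ((A.card : ℝ) * Cb) ^ 2 := by nlinarith
      _ = ((A.card : ℝ) * Cb) ^ 2 := rfl
  -- the good event
  set Ec : Set Ω := ⋂ i ∈ C, {ω | L < N i ω} with hEcdef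
  have hEcm : MeasurableSet Ec := by
    refine MeasurableSet.biInter (Set.to_countable _) (fun i _ => ?_)
    exact (hmeas i) measurableSet_Ioi
  -- abbreviations for the terms of the bound
  set T4 : ℝ≥0∞ :=
    ENNReal.ofReal ((k : ℝ) ^ (-(β - α * Real.log (Real.exp 1 * β / α) - 3))) with hT4def
  set TU : ℝ≥0∞ := ⨆ m ∈ Finset.Icc 1 M,
      (∫⁻ x, ENNReal.ofReal ((u x) ^ 2)
        ∂(poissonMeasure (Real.toNNReal ((n : ℝ) * m / k))) + T4) with hTUdef
  set D : ℝ := ⨆ m ∈ Finset.Icc 1 M,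
      |(∑ j ∈ Finset.Icc 1 L, w j * ((m : ℝ) / M) ^ j) - 1| with hDdef
  have hD0 : 0 ≤ D :=
    Real.iSup_nonneg (fun m => Real.iSup_nonneg (fun _ => abs_nonneg _))
  have hDle : ∀ m ∈ Finset.Icc 1 M,
      |(∑ j ∈ Finset.Icc 1 L, w j * ((m : ℝ) / M) ^ j) - 1| ≤ D := by
    intro m hm
    set F : ℕ → ℝ := fun m' => ⨆ _ : m' ∈ Finset.Icc 1 M,
      |(∑ j ∈ Finset.Icc 1 L, w j * ((m' : ℝ) / M) ^ j) - 1| with hF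
    have hFzero : ∀ m', m' ∉ Finset.Icc 1 M → F m' = 0 := by
      intro m' hm'
      rw [hF]
      haveI : IsEmpty (m' ∈ Finset.Icc 1 M) := ⟨fun h => hm' h⟩
      exact Real.iSup_of_isEmpty _
    have hFb : BddAbove (Set.range F) := by
      refine Set.Finite.bddAbove (Set.Finite.subset
        (Set.Finite.union ((Finset.Icc 1 M).finite_toSet.image F) (Set.finite_singleton 0)) ?_)
      rintro x ⟨m', rfl⟩
      by_cases hm' : m' ∈ Finset.Icc 1 M
      · exact Or.inl ⟨m', hm', rfl⟩
      · exact Or.inr (hFzero m' hm')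
    have h1 : F m = |(∑ j ∈ Finset.Icc 1 L, w j * ((m : ℝ) / M) ^ j) - 1| := by
      rw [hF]; exact ciSup_pos hm
    calc |(∑ j ∈ Finset.Icc 1 L, w j * ((m : ℝ) / M) ^ j) - 1| = F m := h1.symm
      _ ≤ ⨆ m', F m' := le_ciSup hFb m
  -- change of variables to the Poisson measure
  have hmap : ∀ (i : ℕ) (f : ℕ → ℝ), ∫ ω, f (N i ω) ∂μ
      = ∫ x, f x ∂(poissonMeasure (Real.toNNReal ((n:ℝ) * kball i / k))) := by
    intro i f
    rw [← hlaw i]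
    exact (integral_map (hmeas i).aemeasurable
      (measurable_from_top : Measurable f).aestronglyMeasurable).symm
  -- membership facts for A
  have hmemA : ∀ i ∈ A, kball i ∈ Finset.Icc 1 M := by
    intro i hi
    rw [hA, Finset.mem_filter] at hi
    rw [Finset.mem_Icc]
    exact ⟨Nat.one_le_iff_ne_zero.2 ((hmemT i).1 hi.1), hi.2⟩
  -- first moment of X i for i ∈ A
  have hEX : ∀ i ∈ A, ∫ ω, X i ω ∂μ
      = Real.exp (-((n:ℝ) * kball i / k))
        * ((∑ j ∈ Finset.Icc 1 L, w j * ((kball i:ℝ)/M)^j) - 1) := by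
    intro i hi
    show ∫ ω, φ (N i ω) ∂μ = _
    rw [hmap i φ, integral_poisson_eq_sum _ φ L hφL]
    have hIic : Finset.Iic L = insert 0 (Finset.Icc 1 L) := by
      ext x; simp only [Finset.mem_Iic, Finset.mem_insert, Finset.mem_Icc]; omega
    rw [hIic, Finset.sum_insert (by simp)]
    have h0 : poissonPMFReal (Real.toNNReal ((n:ℝ) * kball i / k)) 0 * φ 0
        = - Real.exp (-((n:ℝ) * kball i / k)) := by
      unfold poissonPMFReal
      rw [hlamcoe i]
      simp [hφdef, hu0]
    have hterm : ∀ j ∈ Finset.Icc 1 L, poissonPMFReal (Real.toNNReal ((n:ℝ) * kball i / k)) j * φ j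
        = Real.exp (-((n:ℝ)*kball i/k)) * (w j * ((kball i:ℝ)/M)^j) := by
      intro j hj
      rw [Finset.mem_Icc] at hj
      have hφj : φ j = w j * (Nat.factorial j) * ((k:ℝ)/((n:ℝ)*M))^j := by
        simp only [hφdef]
        rw [hu j, if_pos (⟨hj.1, hj.2⟩ : 1 ≤ j ∧ j ≤ L), if_neg (by omega)]
        ring
      unfold poissonPMFReal
      rw [hlamcoe i, hφj]
      have hfac : ((Nat.factorial j):ℝ) ≠ 0 := by positivity
      have harg : ((n:ℝ) * kball i / k) * ((k:ℝ)/((n:ℝ)*M)) = (kball i : ℝ)/M := by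
        field_simp
      rw [← harg, mul_pow]
      field_simp
    rw [Finset.sum_congr rfl hterm, h0, ← Finset.mul_sum]
    ring
  -- bound on the first moment
  have hexpmono : ∀ i ∈ T, Real.exp (-((n:ℝ)*kball i/k)) ≤ Real.exp (-(n:ℝ)/k) := by
    intro i hi
    apply Real.exp_le_exp.2
    have h1 : (1:ℝ) ≤ (kball i : ℝ) := by
      exact_mod_cast Nat.one_le_iff_ne_zero.2 ((hmemT i).1 hi)
    rw [neg_div, neg_le_neg_iff, div_le_div_iff₀ hk0 hk0]
    nlinarith [mul_nonneg (mul_nonneg hn0.le hk0.le) (sub_nonneg.2 h1)]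
  have hEXabs : ∀ i ∈ A, |∫ ω, X i ω ∂μ| ≤ Real.exp (-(n:ℝ)/k) * D := by
    intro i hi
    rw [hEX i hi, abs_mul, abs_of_pos (Real.exp_pos _)]
    have hiT : i ∈ T := (Finset.mem_filter.1 hi).1
    exact mul_le_mul (hexpmono i hiT) (hDle (kball i) (hmemA i hi)) (abs_nonneg _)
      (Real.exp_pos _).le
  -- second moment of X i
  have hEX2 : ∀ i, ∫ ω, (X i ω)^2 ∂μ
      = (∑ j ∈ Finset.Iic L, poissonPMFReal (Real.toNNReal ((n:ℝ) * kball i / k)) j * (u j)^2)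
        + Real.exp (-((n:ℝ) * kball i / k)) := by
    intro i
    show ∫ ω, (fun x => (φ x)^2) (N i ω) ∂μ = _
    rw [hmap i (fun x => (φ x)^2),
      integral_poisson_eq_sum _ _ L (fun j hj => by simp only [hφL j hj]; norm_num)]
    have hsplit : ∀ j ∈ Finset.Iic L,
        poissonPMFReal (Real.toNNReal ((n:ℝ) * kball i / k)) j * (fun x => (φ x)^2) j
        = poissonPMFReal (Real.toNNReal ((n:ℝ) * kball i / k)) j * (u j)^2
          + poissonPMFReal (Real.toNNReal ((n:ℝ) * kball i / k)) j * (if j = 0 then 1 else 0) := by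
      intro j _
      simp only
      rw [hφsq j]
      ring
    rw [Finset.sum_congr rfl hsplit, Finset.sum_add_distrib]
    congr 1
    rw [Finset.sum_eq_single 0]
    · rw [if_pos rfl, mul_one]
      unfold poissonPMFReal
      rw [hlamcoe i]
      simp
    · intro j _ hj
      rw [if_neg hj, mul_zero]
    · intro h
      exact absurd (Finset.mem_Iic.2 (by omega)) h
  -- per-color bound for the second moment, in ℝ≥0∞
  have hcol : ∀ i ∈ A, ENNReal.ofReal (∫ ω, (X i ω)^2 ∂μ)
      ≤ ENNReal.ofReal (Real.exp (-(n:ℝ)/k)) + TU := by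
    intro i hi
    rw [hEX2 i]
    refine (ENNReal.ofReal_add_le).trans ?_
    rw [add_comm]
    refine add_le_add ?_ ?_
    · exact ENNReal.ofReal_le_ofReal (hexpmono i (Finset.mem_filter.1 hi).1)
    · rw [hTUdef]
      refine le_trans ?_ (le_biSup
        (fun m : ℕ => ∫⁻ x, ENNReal.ofReal ((u x) ^ 2)
          ∂(poissonMeasure (Real.toNNReal ((n : ℝ) * (m:ℝ) / k))) + T4) (hmemA i hi))
      refine le_trans ?_ le_self_add
      rw [lintegral_countable' _, ENNReal.ofReal_sum_of_nonneg
        (fun j _ => mul_nonneg poissonPMFReal_nonneg (sq_nonneg _))]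
      refine le_trans (le_of_eq (Finset.sum_congr rfl ?_)) (ENNReal.sum_le_tsum (Finset.Iic L))
      intro j _
      have hμj : poissonMeasure (Real.toNNReal ((n:ℝ) * kball i / k)) {j}
          = ENNReal.ofReal (poissonPMFReal (Real.toNNReal ((n:ℝ) * kball i / k)) j) :=
        poissonMeasure_singleton _ j
      rw [hμj, ← ENNReal.ofReal_mul (sq_nonneg _), mul_comm]
  -- variance expansion
  have hY2 : ∫ ω, (Y ω)^2 ∂μ = ∑ i ∈ A, ∑ j ∈ A, ∫ ω, X i ω * X j ω ∂μ := by
    have hfun : (fun ω => (Y ω)^2) = (fun ω => ∑ i ∈ A, ∑ j ∈ A, X i ω * X j ω) := by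
      funext ω
      show (∑ i ∈ A, X i ω)^2 = _
      rw [sq, Finset.sum_mul_sum]
    rw [hfun, integral_finset_sum _ (fun i _ => integrable_finset_sum _ (fun j _ => hXXint i j))]
    exact Finset.sum_congr rfl (fun i _ => integral_finset_sum _ (fun j _ => hXXint i j))
  have hterm : ∀ i ∈ A, ∀ j ∈ A, ∫ ω, X i ω * X j ω ∂μ
      ≤ (if i = j then ∫ ω, (X i ω)^2 ∂μ else 0)
        + |∫ ω, X i ω ∂μ| * |∫ ω, X j ω ∂μ| := by
    intro i _ j _
    by_cases hij : i = j
    · subst hij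
      rw [if_pos rfl]
      have he : (fun ω => X i ω * X i ω) = fun ω => (X i ω)^2 := by funext ω; ring
      rw [he]
      exact le_add_of_nonneg_right (by positivity)
    · rw [if_neg hij]
      have h1 : IndepFun (X i) (X j) μ := by
        have h2 : IndepFun (N i) (N j) μ := hindep.indepFun hij
        exact h2.comp (measurable_from_top : Measurable φ) (measurable_from_top : Measurable φ)
      have h2 : ∫ ω, X i ω * X j ω ∂μ = (∫ ω, X i ω ∂μ) * (∫ ω, X j ω ∂μ) :=
        IndepFun.integral_fun_mul_eq_mul_integral h1 (hXint i).aestronglyMeasurable (hXint j).aestronglyMeasurable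
      rw [h2, zero_add]
      exact (le_abs_self _).trans (le_of_eq (abs_mul _ _))
  have hsum2 : ∫ ω, (Y ω)^2 ∂μ
      ≤ (∑ i ∈ A, |∫ ω, X i ω ∂μ|)^2 + ∑ i ∈ A, ∫ ω, (X i ω)^2 ∂μ := by
    rw [hY2]
    calc ∑ i ∈ A, ∑ j ∈ A, ∫ ω, X i ω * X j ω ∂μ
        ≤ ∑ i ∈ A, ∑ j ∈ A, ((if i = j then ∫ ω, (X i ω)^2 ∂μ else 0)
            + |∫ ω, X i ω ∂μ| * |∫ ω, X j ω ∂μ|) :=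
          Finset.sum_le_sum (fun i hi => Finset.sum_le_sum (fun j hj => hterm i hi j hj))
      _ = ∑ i ∈ A, ((∑ j ∈ A, (if i = j then ∫ ω, (X i ω)^2 ∂μ else 0))
            + ∑ j ∈ A, |∫ ω, X i ω ∂μ| * |∫ ω, X j ω ∂μ|) := by
          exact Finset.sum_congr rfl (fun i _ => Finset.sum_add_distrib)
      _ = ∑ i ∈ A, (∫ ω, (X i ω)^2 ∂μ
            + ∑ j ∈ A, |∫ ω, X i ω ∂μ| * |∫ ω, X j ω ∂μ|) := by
          refine Finset.sum_congr rfl (fun i hi => ?_)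
          congr 1
          rw [Finset.sum_ite_eq A i (fun _ => ∫ ω, (X i ω)^2 ∂μ), if_pos hi]
      _ = (∑ i ∈ A, ∫ ω, (X i ω)^2 ∂μ)
            + ∑ i ∈ A, ∑ j ∈ A, |∫ ω, X i ω ∂μ| * |∫ ω, X j ω ∂μ| :=
          Finset.sum_add_distrib
      _ = (∑ i ∈ A, ∫ ω, (X i ω)^2 ∂μ) + (∑ i ∈ A, |∫ ω, X i ω ∂μ|)^2 := by
          rw [sq, Finset.sum_mul_sum]
      _ = (∑ i ∈ A, |∫ ω, X i ω ∂μ|)^2 + ∑ i ∈ A, ∫ ω, (X i ω)^2 ∂μ := add_comm _ _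
  have hcardA : (A.card : ℝ) ≤ (k:ℝ) := by
    refine le_trans ?_ hcardT
    exact_mod_cast Finset.card_le_card (Finset.filter_subset _ _)
  have hsum3 : (∑ i ∈ A, |∫ ω, X i ω ∂μ|)^2
      ≤ (k:ℝ)^2 * Real.exp (-2*(n:ℝ)/k) * D^2 := by
    have h1 : ∑ i ∈ A, |∫ ω, X i ω ∂μ| ≤ (k:ℝ) * (Real.exp (-(n:ℝ)/k) * D) := by
      calc ∑ i ∈ A, |∫ ω, X i ω ∂μ| ≤ ∑ _i ∈ A, Real.exp (-(n:ℝ)/k) * D :=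
            Finset.sum_le_sum hEXabs
        _ = (A.card : ℝ) * (Real.exp (-(n:ℝ)/k) * D) := by
            rw [Finset.sum_const, nsmul_eq_mul]
        _ ≤ (k:ℝ) * (Real.exp (-(n:ℝ)/k) * D) := by
            refine mul_le_mul_of_nonneg_right hcardA (by positivity)
    have h0 : 0 ≤ ∑ i ∈ A, |∫ ω, X i ω ∂μ| := Finset.sum_nonneg (fun i _ => abs_nonneg _)
    have hexp2 : Real.exp (-(n:ℝ)/k)^2 = Real.exp (-2*(n:ℝ)/k) := by
      rw [sq, ← Real.exp_add]
      ring_nf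
    calc (∑ i ∈ A, |∫ ω, X i ω ∂μ|)^2 ≤ ((k:ℝ) * (Real.exp (-(n:ℝ)/k) * D))^2 := by
          nlinarith
      _ = (k:ℝ)^2 * Real.exp (-2*(n:ℝ)/k) * D^2 := by
          rw [← hexp2]
          ring
  -- the variance estimate
  have hvar : ∫⁻ ω, ENNReal.ofReal ((Y ω)^2) ∂μ
      ≤ ENNReal.ofReal ((k:ℝ)^2 * Real.exp (-2*(n:ℝ)/k) * D^2)
        + ENNReal.ofReal ((k:ℝ) * Real.exp (-(n:ℝ)/k)) + A.card • TU := by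
    rw [← ofReal_integral_eq_lintegral_ofReal hY2int (ae_of_all _ (fun ω => sq_nonneg _))]
    calc ENNReal.ofReal (∫ ω, (Y ω)^2 ∂μ)
        ≤ ENNReal.ofReal ((∑ i ∈ A, |∫ ω, X i ω ∂μ|)^2 + ∑ i ∈ A, ∫ ω, (X i ω)^2 ∂μ) :=
          ENNReal.ofReal_le_ofReal hsum2
      _ ≤ ENNReal.ofReal ((∑ i ∈ A, |∫ ω, X i ω ∂μ|)^2)
            + ENNReal.ofReal (∑ i ∈ A, ∫ ω, (X i ω)^2 ∂μ) := ENNReal.ofReal_add_le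
      _ ≤ ENNReal.ofReal ((k:ℝ)^2 * Real.exp (-2*(n:ℝ)/k) * D^2)
            + (ENNReal.ofReal ((k:ℝ) * Real.exp (-(n:ℝ)/k)) + A.card • TU) := by
          refine add_le_add (ENNReal.ofReal_le_ofReal hsum3) ?_
          rw [ENNReal.ofReal_sum_of_nonneg
            (fun i _ => integral_nonneg (fun ω => sq_nonneg _))]
          calc ∑ i ∈ A, ENNReal.ofReal (∫ ω, (X i ω)^2 ∂μ)
              ≤ ∑ _i ∈ A, (ENNReal.ofReal (Real.exp (-(n:ℝ)/k)) + TU) :=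
                Finset.sum_le_sum hcol
            _ = A.card • (ENNReal.ofReal (Real.exp (-(n:ℝ)/k)) + TU) := by
                rw [Finset.sum_const]
            _ = A.card • ENNReal.ofReal (Real.exp (-(n:ℝ)/k)) + A.card • TU := smul_add _ _ _
            _ ≤ ENNReal.ofReal ((k:ℝ) * Real.exp (-(n:ℝ)/k)) + A.card • TU := by
                refine add_le_add ?_ le_rfl
                rw [nsmul_eq_mul, ← ENNReal.ofReal_natCast A.card,
                  ← ENNReal.ofReal_mul (Nat.cast_nonneg _)]
                exact ENNReal.ofReal_le_ofReal
                  (mul_le_mul_of_nonneg_right hcardA (Real.exp_pos _).le)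
      _ = _ := (add_assoc _ _ _).symm
  -- facts about the large colors
  have hmemC : ∀ i ∈ C, (M:ℝ) + 1 ≤ (kball i:ℝ) := by
    intro i hi
    rw [hC, Finset.mem_filter] at hi
    have : M + 1 ≤ kball i := by omega
    exact_mod_cast this
  have hlamC : ∀ i ∈ C, β * Real.log k ≤ (n:ℝ) * kball i / k := by
    intro i hi
    rw [← hnMk]
    have h2 : (M:ℝ) ≤ (kball i : ℝ) := by linarith [hmemC i hi]
    gcongr
  -- Chernoff bound for each large color
  have hchern : ∀ i ∈ C, μ {ω | N i ω ≤ L}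
      ≤ ENNReal.ofReal (Real.exp (-(β * Real.log k))
          * ((β * Real.log k / L)^L * Real.exp L)) := by
    intro i hi
    have hpre : {ω | N i ω ≤ L} = N i ⁻¹' (Set.Iic L) := rfl
    rw [hpre, ← Measure.map_apply (hmeas i) measurableSet_Iic, hlaw i, poisson_Iic]
    apply ENNReal.ofReal_le_ofReal
    have hlc := hlamcoe i
    have hLlam : (L:ℝ) ≤ (n:ℝ) * kball i / k := le_trans hLr (hlamC i hi)
    calc ∑ j ∈ Finset.Iic L, poissonPMFReal (Real.toNNReal ((n:ℝ) * kball i / k)) j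
        = ∑ j ∈ Finset.Iic L, Real.exp (-((n:ℝ) * kball i / k))
            * (((n:ℝ) * kball i / k)^j / (Nat.factorial j)) := by
          refine Finset.sum_congr rfl (fun j _ => ?_)
          unfold poissonPMFReal
          rw [hlc]
          ring
      _ = Real.exp (-((n:ℝ) * kball i / k))
            * ∑ j ∈ Finset.Iic L, ((n:ℝ) * kball i / k)^j / (Nat.factorial j) := by
          rw [Finset.mul_sum]
      _ ≤ Real.exp (-((n:ℝ) * kball i / k))
            * ((((n:ℝ) * kball i / k) / L)^L * Real.exp L) :=
          mul_le_mul_of_nonneg_left (sum_pow_div_factorial_le hL1 hLlam) (Real.exp_pos _).le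
      _ = (Real.exp (-((n:ℝ) * kball i / k)) * (((n:ℝ) * kball i / k) / L)^L)
            * Real.exp L := by ring
      _ ≤ (Real.exp (-(β * Real.log k)) * ((β * Real.log k) / L)^L) * Real.exp L :=
          mul_le_mul_of_nonneg_right (tail_mono hL1 hLr (hlamC i hi)) (Real.exp_pos _).le
      _ = Real.exp (-(β * Real.log k)) * ((β * Real.log k / L)^L * Real.exp L) := by ring
  -- the key real exponent computation
  have hkey4 : (k:ℝ)^2 * (Real.exp (-(β * Real.log k))
        * ((β * Real.log k / L)^L * Real.exp L))
      ≤ (k : ℝ) ^ (-(β - α * Real.log (Real.exp 1 * β / α) - 3)) := by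
    have hpoly : (β * Real.log k / L)^L * Real.exp L
        = Real.exp ((L:ℝ) * Real.log (Real.exp 1 * β / α)) := by
      have h1 : (β * Real.log k / L)^L * Real.exp L
          = ((β * Real.log k / L) * Real.exp 1)^L := by
        rw [mul_pow, ← Real.exp_nat_mul, mul_one]
      have hLne : (L:ℝ) ≠ 0 := by positivity
      have h2 : (β * Real.log k / L) * Real.exp 1 = Real.exp 1 * β / α := by
        rw [hL]
        have hαne : α ≠ 0 := ne_of_gt hα
        have hlogne : Real.log k ≠ 0 := ne_of_gt hlogk
        field_simp
      rw [h1, h2]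
      rw [← Real.rpow_natCast (Real.exp 1 * β / α) L, Real.rpow_def_of_pos (by positivity)]
      rw [mul_comm]
    have h3 : (k:ℝ)^2 = Real.exp (2 * Real.log k) := by
      rw [← Real.rpow_natCast (k:ℝ) 2, Real.rpow_def_of_pos hk0, mul_comm]
      norm_num
    rw [hpoly, hL, h3, Real.rpow_def_of_pos hk0, ← Real.exp_add, ← Real.exp_add]
    refine Real.exp_le_exp.2 ?_
    nlinarith [hlogk.le]
  -- combine: per-large-color bad-event cost is at most T4
  have hbadcol : ∀ i ∈ C, ENNReal.ofReal ((k:ℝ)^2) * μ {ω | N i ω ≤ L} ≤ T4 := by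
    intro i hi
    calc ENNReal.ofReal ((k:ℝ)^2) * μ {ω | N i ω ≤ L}
        ≤ ENNReal.ofReal ((k:ℝ)^2) * ENNReal.ofReal (Real.exp (-(β * Real.log k))
            * ((β * Real.log k / L)^L * Real.exp L)) := mul_le_mul_right (hchern i hi) _
      _ = ENNReal.ofReal ((k:ℝ)^2 * (Real.exp (-(β * Real.log k))
            * ((β * Real.log k / L)^L * Real.exp L))) :=
          (ENNReal.ofReal_mul (by positivity)).symm
      _ ≤ T4 := by
          rw [hT4def]
          exact ENNReal.ofReal_le_ofReal hkey4
  have hEcmc : μ Ecᶜ ≤ ∑ i ∈ C, μ {ω | N i ω ≤ L} := by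
    have hsub : Ecᶜ ⊆ ⋃ i ∈ C, {ω | N i ω ≤ L} := by
      rw [hEcdef, Set.compl_iInter₂]
      refine Set.iUnion₂_mono (fun i hi => ?_)
      intro ω hω
      simp only [Set.mem_compl_iff, Set.mem_setOf_eq, not_lt] at hω ⊢
      exact hω
    exact (measure_mono hsub).trans (measure_biUnion_finset_le C _)
  have hbad : ENNReal.ofReal ((k:ℝ)^2) * μ Ecᶜ ≤ C.card • T4 := by
    calc ENNReal.ofReal ((k:ℝ)^2) * μ Ecᶜ
        ≤ ENNReal.ofReal ((k:ℝ)^2) * ∑ i ∈ C, μ {ω | N i ω ≤ L} :=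
          mul_le_mul_right hEcmc _
      _ = ∑ i ∈ C, ENNReal.ofReal ((k:ℝ)^2) * μ {ω | N i ω ≤ L} := Finset.mul_sum _ _ _
      _ ≤ ∑ _i ∈ C, T4 := Finset.sum_le_sum hbadcol
      _ = C.card • T4 := Finset.sum_const _
  have hT4TU : T4 ≤ TU := by
    rw [hTUdef]
    exact le_trans le_add_self (le_biSup
      (fun m : ℕ => ∫⁻ x, ENNReal.ofReal ((u x) ^ 2)
        ∂(poissonMeasure (Real.toNNReal ((n : ℝ) * (m:ℝ) / k))) + T4)
      (Finset.mem_Icc.2 ⟨le_refl 1, hM1⟩))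
  -- the pointwise (a.e.) comparison
  have hkey : ∀ᵐ ω ∂μ, ENNReal.ofReal ((Stilde ω - (T.card:ℝ)) ^ 2)
      ≤ ENNReal.ofReal ((Y ω)^2)
        + (Ecᶜ).indicator (fun _ => ENNReal.ofReal ((k:ℝ)^2)) ω := by
    filter_upwards [hG] with ω hω
    by_cases hE : ω ∈ Ec
    · have hind : (Ecᶜ).indicator (fun _ => ENNReal.ofReal ((k:ℝ)^2)) ω = 0 :=
        Set.indicator_of_notMem (Set.notMem_compl_iff.2 hE) _
      rw [hind, add_zero]
      apply ENNReal.ofReal_le_ofReal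
      have hSplugsum : Splug ω = ∑ i ∈ T, (if 0 < N i ω then (1:ℝ) else 0) := by
        rw [hSplug ω]
        exact tsum_eq_sum (fun i hi => by rw [hω i hi]; simp)
      have hSplugle : Splug ω ≤ (T.card:ℝ) := by
        rw [hSplugsum]
        calc ∑ i ∈ T, (if 0 < N i ω then (1:ℝ) else 0) ≤ ∑ _i ∈ T, (1:ℝ) :=
            Finset.sum_le_sum (fun i _ => by split <;> norm_num)
          _ = (T.card:ℝ) := by rw [Finset.sum_const, nsmul_eq_mul, mul_one]
      have hShatsum : Shat ω = ∑ i ∈ T, g (N i ω) := by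
        rw [hShat ω]
        exact tsum_eq_sum (fun i hi => by rw [hω i hi, hg0])
      have hYeq : Shat ω - (T.card:ℝ) = Y ω := by
        rw [hShatsum]
        have hcard : (T.card : ℝ) = ∑ _i ∈ T, (1:ℝ) := by
          rw [Finset.sum_const, nsmul_eq_mul, mul_one]
        rw [hcard, ← Finset.sum_sub_distrib]
        have hsplitT : ∑ i ∈ T, (g (N i ω) - 1)
            = ∑ i ∈ A, (g (N i ω) - 1) + ∑ i ∈ C, (g (N i ω) - 1) := by
          rw [hA, hC]
          exact (Finset.sum_filter_add_sum_filter_not T _ _).symm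
        rw [hsplitT]
        have hCzero : ∑ i ∈ C, (g (N i ω) - 1) = 0 := by
          refine Finset.sum_eq_zero (fun i hi => ?_)
          have hE' := hE
          rw [hEcdef] at hE'
          have hNi : L < N i ω := Set.mem_iInter₂.1 hE' i hi
          have hgi : g (N i ω) = 1 := by
            rw [hg _ (by omega), huL _ hNi, add_zero]
          rw [hgi]
          ring
        rw [hCzero, add_zero]
        refine Finset.sum_congr rfl (fun i _ => ?_)
        rw [hgφ]
      rw [hStilde ω]
      calc (min (max (Shat ω) (Splug ω)) (k:ℝ) - (T.card:ℝ))^2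
          ≤ (Shat ω - (T.card:ℝ))^2 := clamp_sq_le hSplugle hcardT
        _ = (Y ω)^2 := by rw [hYeq]
    · have hind : (Ecᶜ).indicator (fun _ => ENNReal.ofReal ((k:ℝ)^2)) ω
          = ENNReal.ofReal ((k:ℝ)^2) :=
        Set.indicator_of_mem (Set.mem_compl hE) _
      rw [hind]
      refine le_add_left (ENNReal.ofReal_le_ofReal ?_)
      nlinarith [hSt0 ω, hStk ω, hT0, hcardT, mul_nonneg (hSt0 ω) hT0,
        mul_nonneg (sub_nonneg.2 (hStk ω)) (sub_nonneg.2 hcardT)]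
  have hmeasY2 : Measurable fun ω => ENNReal.ofReal ((Y ω)^2) :=
    ENNReal.measurable_ofReal.comp (hYmeas.pow_const 2)
  have hTk : T.card ≤ k := by exact_mod_cast hcardT
  calc ∫⁻ ω, ENNReal.ofReal ((Stilde ω - (T.card:ℝ))^2) ∂μ
      ≤ ∫⁻ ω, (ENNReal.ofReal ((Y ω)^2)
          + (Ecᶜ).indicator (fun _ => ENNReal.ofReal ((k:ℝ)^2)) ω) ∂μ :=
        lintegral_mono_ae hkey
    _ = (∫⁻ ω, ENNReal.ofReal ((Y ω)^2) ∂μ)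
          + ∫⁻ ω, (Ecᶜ).indicator (fun _ => ENNReal.ofReal ((k:ℝ)^2)) ω ∂μ :=
        lintegral_add_left hmeasY2 _
    _ = (∫⁻ ω, ENNReal.ofReal ((Y ω)^2) ∂μ) + ENNReal.ofReal ((k:ℝ)^2) * μ Ecᶜ := by
        rw [lintegral_indicator hEcm.compl, setLIntegral_const]
    _ ≤ (ENNReal.ofReal ((k:ℝ)^2 * Real.exp (-2*(n:ℝ)/k) * D^2)
          + ENNReal.ofReal ((k:ℝ) * Real.exp (-(n:ℝ)/k)) + A.card • TU)
          + C.card • T4 := add_le_add hvar hbad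
    _ ≤ (ENNReal.ofReal ((k:ℝ)^2 * Real.exp (-2*(n:ℝ)/k) * D^2)
          + ENNReal.ofReal ((k:ℝ) * Real.exp (-(n:ℝ)/k)) + A.card • TU)
          + C.card • TU := by
        refine add_le_add_right ?_ _
        rw [nsmul_eq_mul, nsmul_eq_mul]
        exact mul_le_mul_right hT4TU _
    _ = ENNReal.ofReal ((k:ℝ)^2 * Real.exp (-2*(n:ℝ)/k) * D^2)
          + ENNReal.ofReal ((k:ℝ) * Real.exp (-(n:ℝ)/k))
          + (A.card + C.card) • TU := by
        rw [add_assoc, ← add_nsmul]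
    _ = ENNReal.ofReal ((k:ℝ)^2 * Real.exp (-2*(n:ℝ)/k) * D^2)
          + ENNReal.ofReal ((k:ℝ) * Real.exp (-(n:ℝ)/k))
          + T.card • TU := by
        rw [hA, hC, Finset.card_filter_add_card_filter_not]
    _ ≤ ENNReal.ofReal ((k:ℝ)^2 * Real.exp (-2*(n:ℝ)/k) * D^2)
          + ENNReal.ofReal ((k:ℝ) * Real.exp (-(n:ℝ)/k))
          + (k : ℝ≥0∞) * TU := by
        refine add_le_add_right ?_ _
        rw [nsmul_eq_mul]
        exact mul_le_mul_left (by exact_mod_cast Nat.cast_le.2 hTk) _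
end

section
/- Let M > L ≥ 1 be integers, let B be the M × L matrix with entries B_{m,j} = (m/M)^j for m ∈ {1,…,M}, j ∈ {1,…,L}, and let 1 ∈ ℝ^M be the all-ones vector. Then min_{w ∈ ℝ^L} ‖Bw − 1‖_2 = (C(M+L+1, L+1)/C(M, L+1) − 1)^{−1/2}, where C(·,·) denotes the binomial coefficient and ‖·‖_2 the Euclidean norm. -/
open Real

namespace Stmt12Aux

open Polynomial Finset

/-- forward difference on sequences -/
def fd (f : ℕ → ℝ) : ℕ → ℝ := fun n => f (n + 1) - f n

lemma fd_iter_shift (t : ℕ) : ∀ (f : ℕ → ℝ) (s : ℕ),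
    fd^[t] (fun n => f (n + s)) = fun n => fd^[t] f (n + s) := by
  induction t with
  | zero => intro f s; simp
  | succ t ih =>
    intro f s
    rw [Function.iterate_succ_apply, Function.iterate_succ_apply]
    have h1 : fd (fun n => f (n + s)) = fun n => (fd f) (n + s) := by
      funext n; simp only [fd, add_right_comm n s 1]
    rw [h1, ih]

lemma fd_iter_add (t : ℕ) : ∀ (f g : ℕ → ℝ),
    fd^[t] (fun n => f n + g n) = fun n => fd^[t] f n + fd^[t] g n := by
  induction t with
  | zero => intro f g; simp
  | succ t ih =>
    intro f g
    rw [Function.iterate_succ_apply, Function.iterate_succ_apply,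
      Function.iterate_succ_apply]
    have h1 : fd (fun n => f n + g n) = fun n => (fd f) n + (fd g) n := by
      funext n; simp only [fd]; ring
    rw [h1, ih]

lemma fd_iter_vanish (t : ℕ) : ∀ (f : ℕ → ℝ) (n : ℕ),
    (∀ i, i ≤ t → f (n + i) = 0) → fd^[t] f n = 0 := by
  induction t with
  | zero => intro f n h; simpa using h 0 (le_refl 0)
  | succ t ih =>
    intro f n h
    rw [Function.iterate_succ_apply]
    refine ih (fd f) n (fun i hi => ?_)
    have h1 : f (n + i + 1) = 0 := by
      have := h (i + 1) (by omega); rwa [← add_assoc] at this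
    have h2 : f (n + i) = 0 := h i (by omega)
    simp [fd, h1, h2]

lemma fd_iter_alt (t : ℕ) (f : ℕ → ℝ) : ∀ (n : ℕ),
    (-1 : ℝ) ^ t * fd^[t] f n
      = ∑ i ∈ range (t + 1), (-1 : ℝ) ^ i * (t.choose i : ℝ) * f (n + i) := by
  induction t with
  | zero => intro n; simp
  | succ t ih =>
    intro n
    rw [Function.iterate_succ_apply']
    have hfd : fd (fd^[t] f) n = fd^[t] f (n + 1) - fd^[t] f n := rfl
    have key : (-1:ℝ) ^ (t+1) * fd (fd^[t] f) n
        = -((-1:ℝ)^t * fd^[t] f (n+1)) + (-1:ℝ)^t * fd^[t] f n := by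
      rw [hfd]; ring
    rw [key, ih (n+1), ih n]
    -- RHS target: peel
    set g : ℕ → ℝ := fun i => (-1:ℝ)^i * (t.choose i : ℝ) * f (n + i) with hg
    have htarget : ∑ i ∈ range (t + 2), (-1:ℝ)^i * ((t+1).choose i : ℝ) * f (n + i)
        = (∑ i ∈ range (t+1), (-1:ℝ)^(i+1) * ((t+1).choose (i+1) : ℝ) * f (n + (i+1)))
          + f n := by
      rw [Finset.sum_range_succ' (fun i => (-1:ℝ)^i * ((t+1).choose i : ℝ) * f (n + i)) (t+1)]
      simp
    rw [htarget]
    have hsplit : ∀ i ∈ range (t+1),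
        (-1:ℝ)^(i+1) * ((t+1).choose (i+1) : ℝ) * f (n + (i+1))
          = -((-1:ℝ)^i * (t.choose i : ℝ) * f (n + 1 + i)) + g (i+1) := by
      intro i hi
      rw [hg]
      have : ((t+1).choose (i+1) : ℝ) = (t.choose i : ℝ) + (t.choose (i+1) : ℝ) := by
        rw [Nat.choose_succ_succ]; push_cast; ring
      rw [this]
      have harg : n + (i + 1) = n + 1 + i := by omega
      rw [harg]
      have harg2 : n + 1 + i = n + (i+1) := by omega
      simp only [pow_succ]
      rw [harg2]
      ring
    have hgsum : ∑ i ∈ range (t+1), g (i+1) = (∑ i ∈ range (t+1), g i) - g 0 := by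
      have h2 : ∑ i ∈ range (t+2), g i = (∑ i ∈ range (t+1), g (i+1)) + g 0 :=
        Finset.sum_range_succ' g (t+1)
      have h3 : ∑ i ∈ range (t+2), g i = (∑ i ∈ range (t+1), g i) + g (t+1) :=
        Finset.sum_range_succ g (t+1)
      have h4 : g (t+1) = 0 := by simp [hg, Nat.choose_succ_self]
      rw [h4, add_zero] at h3
      rw [h2] at h3
      linarith
    have hg0 : g 0 = f n := by simp [hg]
    rw [Finset.sum_congr rfl hsplit, Finset.sum_add_distrib, hgsum, hg0,
      Finset.sum_neg_distrib]
    ring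

/-- polynomial forward difference -/
noncomputable def pd (q : ℝ[X]) : ℝ[X] := q.comp (X + C 1) - q

lemma pd_eval (q : ℝ[X]) (x : ℝ) : (pd q).eval x = q.eval (x + 1) - q.eval x := by
  simp [pd, eval_comp]

lemma pd_C (a : ℝ) : pd (C a) = 0 := by simp [pd]

lemma fd_iter_eval (t : ℕ) : ∀ (q : ℝ[X]) (n : ℕ),
    fd^[t] (fun m : ℕ => q.eval (m : ℝ)) n = (pd^[t] q).eval (n : ℝ) := by
  induction t with
  | zero => intro q n; simp
  | succ t ih =>
    intro q n
    rw [Function.iterate_succ_apply, Function.iterate_succ_apply]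
    have h1 : fd (fun m : ℕ => q.eval (m:ℝ)) = fun m : ℕ => (pd q).eval (m:ℝ) := by
      funext m; rw [pd_eval]; simp only [fd]; push_cast; ring
    rw [h1, ih]

lemma natDegree_pd_lt (q : ℝ[X]) (h : 0 < q.natDegree) : (pd q).natDegree < q.natDegree := by
  rcases eq_or_ne (pd q) 0 with h0 | h0
  · simpa [h0] using h
  have hq0 : q ≠ 0 := fun hh => by simp [hh] at h
  have hx : (X + C (1:ℝ)).natDegree = 1 := natDegree_X_add_C 1
  have hcomp_nd : (q.comp (X + C 1)).natDegree = q.natDegree := by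
    rw [natDegree_comp, hx, mul_one]
  have hlc : (q.comp (X + C 1)).leadingCoeff = q.leadingCoeff := by
    rw [leadingCoeff_comp (by rw [hx]; exact one_ne_zero)]
    have : (X + C (1:ℝ)).leadingCoeff = 1 := by
      exact (monic_X_add_C (1:ℝ)).leadingCoeff
    rw [this, one_pow, mul_one]
  have hcomp0 : q.comp (X + C 1) ≠ 0 := by
    intro hh
    apply hq0
    rw [← leadingCoeff_eq_zero] at hh ⊢
    rw [← hlc, hh]
  have hdeg : (q.comp (X + C 1)).degree = q.degree := by
    rw [degree_eq_natDegree hcomp0, degree_eq_natDegree hq0, hcomp_nd]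
  have hlt : (pd q).degree < q.degree := by
    have h5 := degree_sub_lt hdeg hcomp0 hlc
    rw [hdeg] at h5
    simpa [pd] using h5
  exact natDegree_lt_natDegree h0 hlt

lemma natDegree_pd_iter_le (t : ℕ) : ∀ (q : ℝ[X]) (n : ℕ),
    q.natDegree ≤ n + t → (pd^[t] q).natDegree ≤ n := by
  induction t with
  | zero => intro q n h; simpa using h
  | succ t ih =>
    intro q n h
    rw [Function.iterate_succ_apply]
    refine ih (pd q) n ?_
    rcases Nat.eq_zero_or_pos q.natDegree with h0 | h0
    · obtain ⟨a, rfl⟩ := natDegree_eq_zero.mp h0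
      simp [pd_C]
    · have := natDegree_pd_lt q h0
      omega

lemma pd_derivative (q : ℝ[X]) : derivative (pd q) = pd (derivative q) := by
  simp only [pd, derivative_sub, derivative_comp]
  simp

lemma pd_iter_derivative (t : ℕ) : ∀ (q : ℝ[X]),
    derivative (pd^[t] q) = pd^[t] (derivative q) := by
  induction t with
  | zero => intro q; simp
  | succ t ih =>
    intro q
    rw [Function.iterate_succ_apply, Function.iterate_succ_apply, ← pd_derivative, ih]

/-- hockey stick, range version -/
lemma hockey_range (N k : ℕ) : ∑ i ∈ range N, i.choose k = N.choose (k + 1) := by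
  induction N with
  | zero => simp
  | succ N ih => rw [Finset.sum_range_succ, ih, Nat.choose_succ_succ' N k]; ring

lemma cast_prod_sub (y k : ℕ) : ∏ t ∈ range k, ((y:ℝ) - t) = (y.descFactorial k : ℝ) := by
  induction k with
  | zero => simp
  | succ k ih =>
    rw [Finset.prod_range_succ, ih, Nat.descFactorial_succ]
    rcases lt_or_ge y k with h | h
    · rw [Nat.descFactorial_eq_zero_iff_lt.mpr h]
      simp
    · push_cast [Nat.cast_sub h]
      ring

lemma prod_neg_one_add (k : ℕ) : ∏ u ∈ range k, (-(1 + (u:ℝ))) = (-1:ℝ)^k * (Nat.factorial k : ℝ) := by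
  induction k with
  | zero => simp
  | succ k ih =>
    rw [Finset.prod_range_succ, ih, Nat.factorial_succ]
    push_cast
    ring

lemma sum_Icc_one {β : Type*} [AddCommMonoid β] (M : ℕ) (f : ℕ → β) :
    ∑ m ∈ Icc 1 M, f m = ∑ i ∈ range M, f (i + 1) := by
  rw [← Finset.Ico_add_one_right_eq_Icc, Finset.sum_Ico_eq_sum_range]
  have h : M + 1 - 1 = M := rfl
  rw [h]
  exact Finset.sum_congr rfl fun i _ => by rw [add_comm]

lemma telescope_Icc (M : ℕ) (f : ℕ → ℝ) :
    ∑ m ∈ Icc 1 M, (f (m + 1) - f m) = f (M + 1) - f 1 := by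
  rw [sum_Icc_one]
  exact Finset.sum_range_sub (fun i => f (i + 1)) M

noncomputable def gP (L M : ℕ) : ℝ[X] :=
  (∏ t ∈ range (L + 1), (X - C (t : ℝ))) * ∏ t ∈ range L, (C ((M + L - t : ℕ) : ℝ) - X)

noncomputable def gf (L M : ℕ) : ℕ → ℝ := fun n => (gP L M).eval (n : ℝ)

lemma gf_eq (L M n : ℕ) : gf L M n =
    (∏ t ∈ range (L + 1), ((n:ℝ) - t)) * ∏ t ∈ range L, (((M + L - t : ℕ) : ℝ) - n) := by
  simp [gf, gP, eval_prod]

lemma gf_lo {L M n : ℕ} (h : n ≤ L) : gf L M n = 0 := by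
  rw [gf_eq]
  apply mul_eq_zero_of_left
  exact Finset.prod_eq_zero (i := n) (Finset.mem_range.mpr (by omega)) (by simp)

lemma gf_hi {L M n : ℕ} (h1 : M + 1 ≤ n) (h2 : n ≤ M + L) : gf L M n = 0 := by
  rw [gf_eq]
  apply mul_eq_zero_of_right
  refine Finset.prod_eq_zero (i := M + L - n) (Finset.mem_range.mpr (by omega)) ?_
  have : M + L - (M + L - n) = n := by omega
  rw [this]
  simp

/-- summation by parts orthogonality -/
lemma ortho (L M : ℕ) (hLM : L < M) :
    ∀ t, t ≤ L → ∀ s, s + t ≤ L → ∀ q : ℝ[X], q.natDegree < t →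
      ∑ m ∈ Icc 1 M, q.eval (m:ℝ) * fd^[t] (gf L M) (m + s) = 0 := by
  intro t
  induction t with
  | zero => intro _ s _ q hq; omega
  | succ t ih =>
    intro ht s hs q hq
    have key : ∀ m : ℕ, q.eval (m:ℝ) * fd^[t+1] (gf L M) (m + s)
        = (q.eval ((m+1:ℕ):ℝ) * fd^[t] (gf L M) ((m+1) + s)
            - q.eval (m:ℝ) * fd^[t] (gf L M) (m + s))
          - (q.comp (X + C 1) - q).eval (m:ℝ) * fd^[t] (gf L M) (m + (s+1)) := by
      intro m
      rw [Function.iterate_succ_apply']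
      have h1 : fd (fd^[t] (gf L M)) (m + s)
          = fd^[t] (gf L M) (m + s + 1) - fd^[t] (gf L M) (m + s) := rfl
      have e1 : m + s + 1 = (m+1) + s := by omega
      have e2 : m + (s+1) = (m+1) + s := by omega
      rw [h1, e1, e2]
      have h2 : (q.comp (X + C 1) - q).eval (m:ℝ) = q.eval ((m:ℝ)+1) - q.eval (m:ℝ) := by
        simp [eval_comp]
      rw [h2]
      push_cast
      ring
    rw [Finset.sum_congr rfl (fun m _ => key m), Finset.sum_sub_distrib]
    have htel : ∑ m ∈ Icc 1 M, (q.eval ((m+1:ℕ):ℝ) * fd^[t] (gf L M) ((m+1) + s)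
        - q.eval (m:ℝ) * fd^[t] (gf L M) (m + s)) = 0 := by
      have := telescope_Icc M (fun m => q.eval (m:ℝ) * fd^[t] (gf L M) (m + s))
      rw [this]
      have hhi : fd^[t] (gf L M) ((M+1) + s) = 0 := by
        apply fd_iter_vanish
        intro i hi
        exact gf_hi (by omega) (by omega)
      have hlo : fd^[t] (gf L M) (1 + s) = 0 := by
        apply fd_iter_vanish
        intro i hi
        exact gf_lo (by omega)
      rw [hhi, hlo]
      ring
    rw [htel, zero_sub, neg_eq_zero]
    rcases Nat.eq_zero_or_pos q.natDegree with h0 | h0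
    · obtain ⟨a, rfl⟩ := natDegree_eq_zero.mp h0
      have : (C a).comp (X + C (1:ℝ)) - C a = 0 := by simp
      rw [this]
      simp
    · have hdlt : (q.comp (X + C 1) - q).natDegree < t := by
        have h1 : (q.comp (X + C 1) - q).natDegree < q.natDegree := by
          rcases eq_or_ne (q.comp (X + C 1) - q) 0 with hz | hz
          · rw [hz]; simpa using h0
          · have hq0 : q ≠ 0 := fun hh => by simp [hh] at h0
            have hcomp_nd : (q.comp (X + C 1)).natDegree = q.natDegree := by
              rw [natDegree_comp, natDegree_X_add_C, mul_one]
            have hlc : (q.comp (X + C 1)).leadingCoeff = q.leadingCoeff := by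
              rw [leadingCoeff_comp (by rw [natDegree_X_add_C]; exact one_ne_zero)]
              have : (X + C (1:ℝ)).leadingCoeff = 1 := by
                exact (monic_X_add_C (1:ℝ)).leadingCoeff
              rw [this, one_pow, mul_one]
            have hcomp0 : q.comp (X + C 1) ≠ 0 := by
              intro hh
              apply hq0
              rw [← leadingCoeff_eq_zero] at hh ⊢
              rw [← hlc, hh]
            have hdeg : (q.comp (X + C 1)).degree = q.degree := by
              rw [degree_eq_natDegree hcomp0, degree_eq_natDegree hq0, hcomp_nd]
            have h5 := degree_sub_lt hdeg hcomp0 hlc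
            rw [hdeg] at h5
            exact natDegree_lt_natDegree hz h5
        omega
      exact ih (by omega) (s+1) (by omega) _ hdlt

/-- discrete Leibniz: difference of n * h n -/
lemma fd_iter_mul_id (t : ℕ) : ∀ (h : ℕ → ℝ) (m : ℕ),
    fd^[t+1] (fun n => (n:ℝ) * h n) m
      = (m:ℝ) * fd^[t+1] h m + ((t:ℝ)+1) * fd^[t] h (m+1) := by
  induction t with
  | zero =>
    intro h m
    simp only [zero_add, Function.iterate_one, Function.iterate_zero_apply, fd]
    push_cast
    ring
  | succ t ih =>
    intro h m
    rw [Function.iterate_succ_apply]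
    have hfd : fd (fun n => (n:ℝ) * h n) = fun (n:ℕ) => (n:ℝ) * (fd h) n + h (n+1) := by
      funext n; simp only [fd]; push_cast; ring
    rw [hfd, fd_iter_add (t+1) (fun (n:ℕ) => (n:ℝ) * (fd h) n) (fun n => h (n+1))]
    have h1 : fd^[t+1] (fun (n:ℕ) => (n:ℝ) * (fd h) n) m
        = (m:ℝ) * fd^[t+1] (fd h) m + ((t:ℝ)+1) * fd^[t] (fd h) (m+1) := ih (fd h) m
    have h2 : fd^[t+1] (fun n => h (n+1)) m = fd^[t+1] h (m+1) := by
      have := fd_iter_shift (t+1) h 1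
      calc fd^[t+1] (fun n => h (n+1)) m = fd^[t+1] (fun n => h (n+1)) m := rfl
        _ = fd^[t+1] h (m+1) := by rw [this]
    dsimp only
    rw [h1, h2]
    have h3 : fd^[t+1] (fd h) m = fd^[t+2] h m := by
      rw [← Function.iterate_succ_apply]
    have h4 : fd^[t] (fd h) (m+1) = fd^[t+1] h (m+1) := by
      rw [← Function.iterate_succ_apply]
    rw [h3, h4]
    push_cast
    ring

noncomputable def Ff (L M s : ℕ) : ℕ → ℝ :=
  fun m => gf L M (m + s) / ∏ i ∈ range s, ((m:ℝ) + 1 + i)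

lemma Ff_zero (L M s : ℕ) (hs : s ≤ L) : Ff L M s 0 = 0 := by
  simp only [Ff]
  rw [show (0 + s) = s from by omega, gf_lo hs, zero_div]

lemma Ff_succ (L M s m : ℕ) : Ff L M s (m+1) / ((m:ℝ)+1) = Ff L M (s+1) m := by
  simp only [Ff]
  have e1 : m + 1 + s = m + (s + 1) := by omega
  have hden : ∏ i ∈ range (s+1), ((m:ℝ)+1+(i:ℝ))
      = (∏ i ∈ range s, (((m+1:ℕ):ℝ)+1+(i:ℝ))) * ((m:ℝ)+1) := by
    rw [Finset.prod_range_succ' (fun i => (m:ℝ)+1+(i:ℝ)) s]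
    have h2 : ∀ i ∈ range s, (m:ℝ)+1+((i+1:ℕ):ℝ) = ((m+1:ℕ):ℝ)+1+(i:ℝ) := by
      intro i _; push_cast; ring
    rw [Finset.prod_congr rfl h2]
    push_cast
    ring
  rw [e1, div_div, hden]

lemma Bstep (L M t s : ℕ) (hst : s + t + 1 ≤ L) :
    ∑ m ∈ Icc 1 M, fd^[t+1] (Ff L M s) m / m
      = ((t:ℝ)+1) * ∑ m ∈ Icc 1 M, fd^[t] (Ff L M (s+1)) m / m := by
  set h : ℕ → ℝ := fun (n:ℕ) => Ff L M s n / n with hh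
  have hfs : Ff L M s = fun (n:ℕ) => (n:ℝ) * h n := by
    funext n
    cases n with
    | zero => simp [Ff_zero L M s (by omega)]
    | succ k =>
      rw [hh]
      have : ((k+1:ℕ):ℝ) ≠ 0 := by push_cast; positivity
      field_simp
  have hsum1 : ∀ m ∈ Icc 1 M, fd^[t+1] (Ff L M s) m / m
      = fd^[t+1] h m + ((t:ℝ)+1) * (fd^[t] h (m+1) / m) := by
    intro m hm
    have hm1 : 1 ≤ m := (Finset.mem_Icc.mp hm).1
    have hm0 : (m:ℝ) ≠ 0 := by positivity
    rw [hfs, fd_iter_mul_id t h m]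
    field_simp
  rw [Finset.sum_congr rfl hsum1, Finset.sum_add_distrib]
  have htel : ∑ m ∈ Icc 1 M, fd^[t+1] h m = 0 := by
    have hstep : ∀ m : ℕ, fd^[t+1] h m = fd^[t] h (m+1) - fd^[t] h m := by
      intro m; rw [Function.iterate_succ_apply']; rfl
    rw [Finset.sum_congr rfl (fun m _ => hstep m), telescope_Icc]
    have hhi : fd^[t] h (M+1) = 0 := by
      apply fd_iter_vanish
      intro i hi
      rw [hh]
      have : gf L M (M+1+i+s) = 0 := gf_hi (by omega) (by omega)
      simp [Ff, this]
    have hlo : fd^[t] h 1 = 0 := by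
      apply fd_iter_vanish
      intro i hi
      rw [hh]
      have : gf L M (1+i+s) = 0 := gf_lo (by omega)
      simp [Ff, this]
    rw [hhi, hlo]; ring
  rw [htel, zero_add, Finset.mul_sum]
  apply Finset.sum_congr rfl
  intro m hm
  have hshift : fd^[t] h (m+1) = fd^[t] (Ff L M (s+1)) m := by
    have h2 : (fun (n:ℕ) => h (n+1)) = Ff L M (s+1) := by
      funext n
      rw [hh, ← Ff_succ L M s n]
      push_cast
      rfl
    rw [← h2]
    have hsh := fd_iter_shift t h 1
    calc fd^[t] h (m+1) = (fun n => fd^[t] h (n+1)) m := rfl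
      _ = fd^[t] (fun (n:ℕ) => h (n+1)) m := by rw [hsh]
  rw [hshift]

lemma Fbase (L M m : ℕ) (hLM : L < M) (h1 : 1 ≤ m) (h2 : m ≤ M) :
    Ff L M L m / m = ((M - m).descFactorial L : ℝ) := by
  simp only [Ff]
  rw [gf_eq]
  have hA : ∏ t ∈ range (L+1), (((m + L : ℕ):ℝ) - t) = ∏ i ∈ range (L+1), ((m:ℝ) + i) := by
    rw [← Finset.prod_range_reflect (fun i => (m:ℝ) + i) (L+1)]
    apply Finset.prod_congr rfl
    intro t ht
    have ht' : t ≤ L := by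
      have := Finset.mem_range.mp ht; omega
    have e : (L + 1 - 1 - t : ℕ) = L - t := by omega
    rw [e]
    push_cast [Nat.cast_sub ht']
    ring
  have hD : (∏ i ∈ range L, ((m:ℝ) + 1 + i)) * m = ∏ i ∈ range (L+1), ((m:ℝ) + i) := by
    rw [Finset.prod_range_succ' (fun i => (m:ℝ) + (i:ℝ)) L]
    have h2 : ∀ i ∈ range L, (m:ℝ)+((i+1:ℕ):ℝ) = (m:ℝ)+1+(i:ℝ) := by
      intro i _; push_cast; ring
    rw [Finset.prod_congr rfl h2]
    push_cast
    ring
  have hB : ∏ t ∈ range L, (((M + L - t : ℕ):ℝ) - ((m+L:ℕ):ℝ))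
      = ((M - m).descFactorial L : ℝ) := by
    rw [← cast_prod_sub (M - m) L]
    apply Finset.prod_congr rfl
    intro t ht
    have ht' : t < L := Finset.mem_range.mp ht
    have c1 : ((M + L - t : ℕ):ℝ) = (M:ℝ) + L - t := by
      push_cast [Nat.cast_sub (show t ≤ M + L by omega)]
      ring
    have c2 : ((M - m : ℕ):ℝ) = (M:ℝ) - m := by
      push_cast [Nat.cast_sub h2]
      ring
    rw [c1, c2]
    push_cast
    ring
  rw [hA, hB, div_div, hD]
  have hne : (∏ i ∈ range (L+1), ((m:ℝ) + i)) ≠ 0 := by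
    apply Finset.prod_ne_zero_iff.mpr
    intro i _
    have : 0 < (m:ℝ) + i := by positivity
    linarith
  rw [mul_comm, mul_div_assoc, div_self hne, mul_one]

lemma Bval (L M : ℕ) (hLM : L < M) : ∀ t s, s + t = L →
    ∑ m ∈ Icc 1 M, fd^[t] (Ff L M s) m / m
      = (Nat.factorial t : ℝ) * ((Nat.factorial L : ℝ) * (M.choose (L+1) : ℝ)) := by
  intro t
  induction t with
  | zero =>
    intro s hs
    have hsL : s = L := by omega
    rw [hsL]
    simp only [Function.iterate_zero_apply]
    have hcongr : ∀ m ∈ Icc 1 M, Ff L M L m / m = (((M-m).descFactorial L : ℕ) : ℝ) :=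
      fun m hm => Fbase L M m hLM (Finset.mem_Icc.mp hm).1 (Finset.mem_Icc.mp hm).2
    rw [Finset.sum_congr rfl hcongr, ← Nat.cast_sum]
    have hN : ∑ m ∈ Icc 1 M, (M-m).descFactorial L
        = Nat.factorial L * M.choose (L+1) := by
      have h1 : ∑ m ∈ Icc 1 M, (M-m).descFactorial L
          = ∑ i ∈ range M, (M-1-i).descFactorial L := by
        rw [sum_Icc_one M (fun m => (M-m).descFactorial L)]
        apply Finset.sum_congr rfl
        intro i _
        congr 1
        omega
      rw [h1, Finset.sum_range_reflect (fun i => i.descFactorial L) M]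
      have h2 : ∀ i ∈ range M, i.descFactorial L = Nat.factorial L * i.choose L :=
        fun i _ => Nat.descFactorial_eq_factorial_mul_choose i L
      rw [Finset.sum_congr rfl h2, ← Finset.mul_sum, hockey_range]
    rw [hN]
    rw [Nat.factorial_zero]
    push_cast
    ring
  | succ t ih =>
    intro s hs
    rw [Bstep L M t s (by omega), ih (s+1) (by omega)]
    push_cast [Nat.factorial_succ]
    ring

lemma prod_erase_eval (L i : ℕ) (hi : i ≤ L) :
    ∏ t ∈ (range (L+1)).erase i, ((i:ℝ) - t)
      = (-1:ℝ)^(L-i) * (Nat.factorial i : ℝ) * (Nat.factorial (L-i) : ℝ) := by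
  have hsplit : (range (L+1)).erase i = range i ∪ Ico (i+1) (L+1) := by
    ext x
    simp only [Finset.mem_erase, Finset.mem_range, Finset.mem_union, Finset.mem_Ico]
    omega
  have hdisj : Disjoint (range i) (Ico (i+1) (L+1)) := by
    rw [Finset.disjoint_left]
    intro x hx hx'
    simp only [Finset.mem_range] at hx
    simp only [Finset.mem_Ico] at hx'
    omega
  rw [hsplit, Finset.prod_union hdisj]
  have h1 : ∏ t ∈ range i, ((i:ℝ) - t) = (Nat.factorial i : ℝ) := by
    rw [cast_prod_sub i i, Nat.descFactorial_self]
  have h2 : ∏ t ∈ Ico (i+1) (L+1), ((i:ℝ) - t)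
      = (-1:ℝ)^(L-i) * (Nat.factorial (L-i) : ℝ) := by
    rw [Finset.prod_Ico_eq_prod_range]
    have e : L + 1 - (i + 1) = L - i := by omega
    rw [e]
    have h3 : ∀ u ∈ range (L-i), (i:ℝ) - ((i+1+u:ℕ):ℝ) = -(1 + (u:ℝ)) := by
      intro u _; push_cast; ring
    rw [Finset.prod_congr rfl h3, prod_neg_one_add]
  rw [h1, h2]
  ring

lemma deriv_gP_eval (L M i : ℕ) (hi : i ≤ L) (hLM : L < M) :
    (derivative (gP L M)).eval (i:ℝ)
      = (-1:ℝ)^(L-i) * (Nat.factorial i : ℝ) * (Nat.factorial (L-i) : ℝ)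
        * ((Nat.factorial L : ℝ) * ((M + L - i).choose L : ℝ)) := by
  have hmem : i ∈ range (L+1) := Finset.mem_range.mpr (by omega)
  have hfact : gP L M = (X - C (i:ℝ)) *
      ((∏ t ∈ (range (L+1)).erase i, (X - C (t:ℝ))) *
        ∏ t ∈ range L, (C ((M + L - t : ℕ) : ℝ) - X)) := by
    rw [gP, ← Finset.mul_prod_erase (range (L+1)) _ hmem, mul_assoc]
  rw [hfact]
  rw [derivative_mul, derivative_X_sub_C]
  simp only [eval_add, eval_mul, eval_one, eval_sub, eval_X, eval_C, sub_self,
    zero_mul, one_mul, add_zero, eval_prod]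
  have hQ1 : ∏ t ∈ (range (L+1)).erase i, ((i:ℝ) - (t:ℝ))
      = (-1:ℝ)^(L-i) * (Nat.factorial i : ℝ) * (Nat.factorial (L-i) : ℝ) :=
    prod_erase_eval L i hi
  have hQ2 : ∏ t ∈ range L, (((M + L - t : ℕ):ℝ) - (i:ℝ))
      = (Nat.factorial L : ℝ) * ((M + L - i).choose L : ℝ) := by
    have h3 : ∀ t ∈ range L, ((M + L - t : ℕ):ℝ) - (i:ℝ)
        = ((M + L - i : ℕ):ℝ) - (t:ℝ) := by
      intro t ht
      have ht' : t < L := Finset.mem_range.mp ht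
      rw [Nat.cast_sub (show t ≤ M + L by omega), Nat.cast_sub (show i ≤ M + L by omega)]
      push_cast
      ring
    rw [Finset.prod_congr rfl h3, cast_prod_sub (M + L - i) L,
      Nat.descFactorial_eq_factorial_mul_choose]
    push_cast
    ring
  rw [hQ1, hQ2]

lemma choose_sum_split (L M : ℕ) :
    M.choose (L+1) + ∑ i ∈ range (L+1), (M + i).choose L = (M+L+1).choose (L+1) := by
  have h1 : ∑ i ∈ range (M+L+1), i.choose L = (M+L+1).choose (L+1) := hockey_range _ _
  have h2 : ∑ i ∈ range M, i.choose L = M.choose (L+1) := hockey_range _ _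
  have h3 : ∑ i ∈ Ico M (M+L+1), i.choose L = ∑ i ∈ range (L+1), (M + i).choose L := by
    rw [Finset.sum_Ico_eq_sum_range]
    have e : M + L + 1 - M = L + 1 := by omega
    rw [e]
  have h4 : ∑ i ∈ range (M+L+1), i.choose L
      = ∑ i ∈ range M, i.choose L + ∑ i ∈ Ico M (M+L+1), i.choose L :=
    (Finset.sum_range_add_sum_Ico _ (show M ≤ M+L+1 by omega)).symm
  omega

lemma choose_reflect (L M : ℕ) :
    ∑ i ∈ range (L+1), ((M + L - i).choose L) = ∑ i ∈ range (L+1), (M + i).choose L := by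
  have := Finset.sum_range_reflect (fun i => (M + i).choose L) (L+1)
  rw [← this]
  apply Finset.sum_congr rfl
  intro i hi
  have hiL : i ≤ L := by have := Finset.mem_range.mp hi; omega
  congr 1
  omega

lemma choose_strict (L M : ℕ) (hLM : L < M) :
    M.choose (L+1) < (M+L+1).choose (L+1) := by
  have h1 : 0 < M.choose L := Nat.choose_pos (by omega)
  have h2 : (M+1).choose (L+1) = M.choose L + M.choose (L+1) := Nat.choose_succ_succ M L
  have h3 : (M+1).choose (L+1) ≤ (M+L+1).choose (L+1) :=
    Nat.choose_le_choose (L+1) (by omega)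
  omega


end Stmt12Aux

open Real Stmt12Aux Polynomial Finset in
theorem stmt12 (L M : ℕ) (hL : 1 ≤ L) (hLM : L < M) :
    (⨅ w : ℕ → ℝ, Real.sqrt (∑ m ∈ Finset.Icc 1 M,
        ((∑ j ∈ Finset.Icc 1 L, w j * ((m : ℝ) / M) ^ j) - 1) ^ 2))
      = ((Nat.choose (M + L + 1) (L + 1) : ℝ) / (Nat.choose M (L + 1) : ℝ) - 1)
          ^ (-(1 : ℝ) / 2) := by
  classical
  set G : Polynomial ℝ := gP L M with hG
  set U : Polynomial ℝ := (pd)^[L] G with hUdef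
  have hUf : ∀ n : ℕ, U.eval (n:ℝ) = fd^[L] (gf L M) n := by
    intro n
    rw [hUdef, ← fd_iter_eval L G n]
    rfl
  have hU0 : U.coeff 0 = 0 := by
    rw [coeff_zero_eq_eval_zero]
    have h1 : U.eval ((0:ℕ):ℝ) = fd^[L] (gf L M) 0 := hUf 0
    norm_num at h1
    rw [h1]
    apply fd_iter_vanish
    intro i hi
    exact gf_lo (by omega)
  set P : Polynomial ℝ := U.divX with hPdef
  have hUP : U = X * P := by
    conv_lhs => rw [← X_mul_divX_add U]
    rw [hU0, map_zero, add_zero]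
  have hGdeg : G.natDegree ≤ (L+1) + L := by
    refine le_trans (natDegree_mul_le) (add_le_add ?_ ?_)
    · refine le_trans (natDegree_prod_le _ _) ?_
      have : ∀ t ∈ range (L+1), (X - C (t:ℝ)).natDegree = 1 :=
        fun t _ => natDegree_X_sub_C _
      rw [Finset.sum_congr rfl this]
      simp
    · refine le_trans (natDegree_prod_le _ _) ?_
      have : ∀ t ∈ range L, (C ((M + L - t : ℕ):ℝ) - X).natDegree = 1 := by
        intro t _
        have e : C ((M + L - t : ℕ):ℝ) - X = -(X - C ((M + L - t : ℕ):ℝ)) := by ring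
        rw [e, natDegree_neg, natDegree_X_sub_C]
      rw [Finset.sum_congr rfl this]
      simp
  have hUdeg : U.natDegree ≤ L + 1 := natDegree_pd_iter_le L G (L+1) hGdeg
  have hPdeg : P.natDegree ≤ L := by
    rcases eq_or_ne P 0 with h0 | h0
    · simp [h0]
    · have h1 : U.natDegree = 1 + P.natDegree := by
        rw [hUP, natDegree_mul X_ne_zero h0, natDegree_X]
      omega
  have hPm : ∀ m : ℕ, (m:ℝ) * P.eval (m:ℝ) = fd^[L] (gf L M) m := by
    intro m
    rw [← hUf m, hUP, eval_mul, eval_X]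
  have horth : ∀ j : ℕ, 1 ≤ j → j ≤ L →
      ∑ m ∈ Icc 1 M, (m:ℝ)^j * P.eval (m:ℝ) = 0 := by
    intro j hj1 hj2
    have h1 : ∀ m ∈ Icc 1 M, (m:ℝ)^j * P.eval (m:ℝ)
        = ((X:Polynomial ℝ)^(j-1)).eval (m:ℝ) * fd^[L] (gf L M) (m + 0) := by
      intro m _
      rw [Nat.add_zero, ← hPm m, eval_pow, eval_X]
      have e : (m:ℝ)^j = (m:ℝ)^(j-1) * m := by
        rw [← pow_succ]
        congr 1
        omega
      rw [e]
      ring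
    rw [Finset.sum_congr rfl h1]
    exact ortho L M hLM L le_rfl 0 (by omega) (X^(j-1))
      (by rw [natDegree_X_pow]; omega)
  set Sv : ℝ := (Nat.factorial L : ℝ) * ((Nat.factorial L : ℝ) * (M.choose (L+1):ℝ))
    with hSv
  have hSsum : ∑ m ∈ Icc 1 M, P.eval (m:ℝ) = Sv := by
    have hFf0 : Ff L M 0 = gf L M := by
      funext n
      simp [Ff]
    have h1 : ∀ m ∈ Icc 1 M, P.eval (m:ℝ) = fd^[L] (Ff L M 0) m / m := by
      intro m hm
      have hm1 : 1 ≤ m := (Finset.mem_Icc.mp hm).1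
      have hm0 : (m:ℝ) ≠ 0 := by positivity
      rw [hFf0, ← hPm m]
      field_simp
    rw [Finset.sum_congr rfl h1, Bval L M hLM L 0 (by omega)]
  -- a0 evaluation
  have ha0 : P.coeff 0 = (Nat.factorial L : ℝ) * ((Nat.factorial L : ℝ)
      * (((M+L+1).choose (L+1) : ℝ) - (M.choose (L+1) : ℝ))) := by
    have hc : P.coeff 0 = U.coeff 1 := by rw [hUP, coeff_X_mul]
    have hd : (derivative U).eval 0 = U.coeff 1 := by
      rw [← coeff_zero_eq_eval_zero, coeff_derivative]
      push_cast
      ring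
    have hcomm : derivative U = pd^[L] (derivative G) := by
      rw [hUdef, pd_iter_derivative L G]
    have heval : (pd^[L] (derivative G)).eval ((0:ℕ):ℝ)
        = fd^[L] (fun n : ℕ => (derivative G).eval (n:ℝ)) 0 :=
      (fd_iter_eval L (derivative G) 0).symm
    have halt := fd_iter_alt L (fun n : ℕ => (derivative G).eval (n:ℝ)) 0
    have hterm : ∀ i ∈ range (L+1),
        (-1:ℝ)^i * (L.choose i : ℝ) * (derivative G).eval ((0+i:ℕ):ℝ)
          = (-1:ℝ)^L * ((Nat.factorial L:ℝ) * ((Nat.factorial L : ℝ)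
              * ((M+L-i).choose L : ℝ))) := by
      intro i hi
      have hiL : i ≤ L := by
        have := Finset.mem_range.mp hi; omega
      have e0 : ((0+i:ℕ):ℝ) = (i:ℝ) := by push_cast; ring
      rw [e0, hG, deriv_gP_eval L M i hiL hLM]
      have hsign : (-1:ℝ)^i * (-1:ℝ)^(L-i) = (-1:ℝ)^L := by
        rw [← pow_add]
        congr 1
        omega
      have hfac : (L.choose i : ℝ) * ((Nat.factorial i : ℝ) * (Nat.factorial (L-i) : ℝ))
          = (Nat.factorial L : ℝ) := by
        rw [← Nat.cast_mul, ← Nat.cast_mul, ← mul_assoc,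
          Nat.choose_mul_factorial_mul_factorial hiL]
      calc (-1:ℝ)^i * (L.choose i : ℝ) * ((-1:ℝ)^(L-i) * (Nat.factorial i : ℝ)
            * (Nat.factorial (L-i) : ℝ) * ((Nat.factorial L : ℝ) * ((M+L-i).choose L : ℝ)))
          = ((-1:ℝ)^i * (-1:ℝ)^(L-i)) * (((L.choose i : ℝ) * ((Nat.factorial i : ℝ)
              * (Nat.factorial (L-i) : ℝ))) * ((Nat.factorial L : ℝ)
                * ((M+L-i).choose L : ℝ))) := by ring
        _ = (-1:ℝ)^L * ((Nat.factorial L:ℝ) * ((Nat.factorial L : ℝ)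
              * ((M+L-i).choose L : ℝ))) := by rw [hsign, hfac]
    rw [Finset.sum_congr rfl hterm, ← Finset.mul_sum] at halt
    have hne : ((-1:ℝ)^L) ≠ 0 := by
      apply pow_ne_zero
      norm_num
    have h8 := mul_left_cancel₀ hne halt
    have hbin : ∑ i ∈ range (L+1), ((M+L-i).choose L : ℝ)
        = ((M+L+1).choose (L+1) : ℝ) - (M.choose (L+1) : ℝ) := by
      rw [← Nat.cast_sum]
      have h5 : ∑ i ∈ range (L+1), (M+L-i).choose L = ∑ i ∈ range (L+1), (M+i).choose L :=
        choose_reflect L M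
      have h6 := choose_sum_split L M
      rw [h5]
      have h7 : ((∑ i ∈ range (L+1), (M+i).choose L : ℕ) : ℝ)
          = (((M+L+1).choose (L+1) : ℕ) : ℝ) - ((M.choose (L+1) : ℕ) : ℝ) := by
        rw [← h6]
        push_cast
        ring
      exact h7
    have h9 : ∑ i ∈ range (L+1), (Nat.factorial L:ℝ) * ((Nat.factorial L:ℝ)
          * ((M+L-i).choose L : ℝ))
        = (Nat.factorial L:ℝ) * ((Nat.factorial L:ℝ)
            * (((M+L+1).choose (L+1):ℝ) - (M.choose (L+1):ℝ))) := by
      rw [← Finset.mul_sum, ← Finset.mul_sum, hbin]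
    rw [hc, ← hd, hcomm]
    have e0 : (0:ℝ) = ((0:ℕ):ℝ) := by norm_num
    rw [e0, heval, h8, h9]
  -- positivity
  have hMc : (0:ℝ) < (M.choose (L+1) : ℝ) := by
    have : 0 < M.choose (L+1) := Nat.choose_pos (by omega)
    exact_mod_cast this
  have hfacpos : (0:ℝ) < (Nat.factorial L : ℝ) := by
    have := Nat.factorial_pos L
    exact_mod_cast this
  have hSvpos : 0 < Sv := by
    rw [hSv]
    positivity
  have hdiffpos : (0:ℝ) < ((M+L+1).choose (L+1) : ℝ) - (M.choose (L+1) : ℝ) := by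
    have := choose_strict L M hLM
    have h1 : (M.choose (L+1) : ℝ) < ((M+L+1).choose (L+1) : ℝ) := by exact_mod_cast this
    linarith
  have ha0pos : 0 < P.coeff 0 := by
    rw [ha0]
    positivity
  set E : ℝ := ((M+L+1).choose (L+1) : ℝ) / (M.choose (L+1) : ℝ) - 1 with hE
  have hEpos : 0 < E := by
    rw [hE]
    rw [sub_pos, lt_div_iff₀ hMc, one_mul]
    linarith
  have ha0E : P.coeff 0 = Sv * E := by
    rw [ha0, hSv, hE]
    field_simp
  -- functional identity
  have hfun : ∀ w : ℕ → ℝ,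
      ∑ m ∈ Icc 1 M, ((∑ j ∈ Icc 1 L, w j * ((m:ℝ)/M)^j) - 1) * P.eval (m:ℝ) = -Sv := by
    intro w
    have hexp : ∀ m ∈ Icc 1 M, ((∑ j ∈ Icc 1 L, w j * ((m:ℝ)/M)^j) - 1) * P.eval (m:ℝ)
        = (∑ j ∈ Icc 1 L, w j / (M:ℝ)^j * ((m:ℝ)^j * P.eval (m:ℝ))) - P.eval (m:ℝ) := by
      intro m _
      rw [sub_mul, one_mul, Finset.sum_mul]
      congr 1
      apply Finset.sum_congr rfl
      intro j _
      rw [div_pow]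
      ring
    rw [Finset.sum_congr rfl hexp, Finset.sum_sub_distrib]
    have hswap : ∑ m ∈ Icc 1 M, ∑ j ∈ Icc 1 L, w j / (M:ℝ)^j * ((m:ℝ)^j * P.eval (m:ℝ))
        = ∑ j ∈ Icc 1 L, w j / (M:ℝ)^j * ∑ m ∈ Icc 1 M, (m:ℝ)^j * P.eval (m:ℝ) := by
      rw [Finset.sum_comm]
      apply Finset.sum_congr rfl
      intro j _
      rw [Finset.mul_sum]
    rw [hswap]
    have hz : ∀ j ∈ Icc 1 L, w j / (M:ℝ)^j * ∑ m ∈ Icc 1 M, (m:ℝ)^j * P.eval (m:ℝ) = 0 := by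
      intro j hj
      rw [horth j (Finset.mem_Icc.mp hj).1 (Finset.mem_Icc.mp hj).2, mul_zero]
    rw [Finset.sum_congr rfl hz, Finset.sum_const_zero, hSsum]
    ring
  -- sum of squares of P
  have hPsq : ∑ m ∈ Icc 1 M, (P.eval (m:ℝ))^2 = P.coeff 0 * Sv := by
    have hexp : ∀ m ∈ Icc 1 M, (P.eval (m:ℝ))^2
        = ∑ j ∈ range (L+1), P.coeff j * ((m:ℝ)^j * P.eval (m:ℝ)) := by
      intro m _
      have he : P.eval (m:ℝ) = ∑ j ∈ range (L+1), P.coeff j * (m:ℝ)^j :=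
        eval_eq_sum_range' (by omega : P.natDegree < L+1) _
      calc (P.eval (m:ℝ))^2
          = (∑ j ∈ range (L+1), P.coeff j * (m:ℝ)^j) * P.eval (m:ℝ) := by
            rw [← he]; ring
        _ = ∑ j ∈ range (L+1), P.coeff j * ((m:ℝ)^j * P.eval (m:ℝ)) := by
            rw [Finset.sum_mul]
            apply Finset.sum_congr rfl
            intro j _
            ring
    rw [Finset.sum_congr rfl hexp, Finset.sum_comm]
    have hpull : ∀ j ∈ range (L+1),
        ∑ m ∈ Icc 1 M, P.coeff j * ((m:ℝ)^j * P.eval (m:ℝ))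
          = P.coeff j * ∑ m ∈ Icc 1 M, (m:ℝ)^j * P.eval (m:ℝ) :=
      fun j _ => (Finset.mul_sum _ _ _).symm
    rw [Finset.sum_congr rfl hpull, Finset.sum_range_succ']
    have hz : ∀ j ∈ range L,
        P.coeff (j+1) * ∑ m ∈ Icc 1 M, (m:ℝ)^(j+1) * P.eval (m:ℝ) = 0 := by
      intro j hj
      rw [horth (j+1) (by omega) (by have := Finset.mem_range.mp hj; omega), mul_zero]
    rw [Finset.sum_congr rfl hz, Finset.sum_const_zero, zero_add]
    have h00 : ∑ m ∈ Icc 1 M, (m:ℝ)^0 * P.eval (m:ℝ) = Sv := by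
      have : ∀ m ∈ Icc 1 M, (m:ℝ)^0 * P.eval (m:ℝ) = P.eval (m:ℝ) := by
        intro m _
        rw [pow_zero, one_mul]
      rw [Finset.sum_congr rfl this, hSsum]
    rw [h00]
  -- the optimal w
  set wst : ℕ → ℝ := fun j => -P.coeff j * (M:ℝ)^j / P.coeff 0 with hwst
  have hM0 : (M:ℝ) ≠ 0 := by
    have : 0 < M := by omega
    positivity
  have ha0ne : P.coeff 0 ≠ 0 := ne_of_gt ha0pos
  have hvst : ∀ m ∈ Icc 1 M,
      (∑ j ∈ Icc 1 L, wst j * ((m:ℝ)/M)^j) - 1 = -(P.eval (m:ℝ)) / P.coeff 0 := by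
    intro m _
    have hterm : ∀ j ∈ Icc 1 L, wst j * ((m:ℝ)/M)^j
        = -(P.coeff j * (m:ℝ)^j) / P.coeff 0 := by
      intro j _
      rw [hwst]
      dsimp only
      rw [div_pow]
      field_simp
    rw [Finset.sum_congr rfl hterm]
    have hsum : ∑ j ∈ Icc 1 L, -(P.coeff j * (m:ℝ)^j) / P.coeff 0
        = -(∑ j ∈ Icc 1 L, P.coeff j * (m:ℝ)^j) / P.coeff 0 := by
      rw [← Finset.sum_neg_distrib, ← Finset.sum_div]
    rw [hsum]
    have hsplit : P.eval (m:ℝ) = P.coeff 0 + ∑ j ∈ Icc 1 L, P.coeff j * (m:ℝ)^j := by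
      rw [eval_eq_sum_range' (show P.natDegree < L+1 by omega)]
      rw [Finset.range_eq_Ico, Finset.sum_eq_sum_Ico_succ_bot (by omega : 0 < L+1)]
      rw [pow_zero, mul_one, Finset.Ico_add_one_right_eq_Icc]
    rw [hsplit]
    field_simp
    ring
  have hval : ∑ m ∈ Icc 1 M, ((∑ j ∈ Icc 1 L, wst j * ((m:ℝ)/M)^j) - 1)^2
      = Sv / P.coeff 0 := by
    have h1 : ∀ m ∈ Icc 1 M, ((∑ j ∈ Icc 1 L, wst j * ((m:ℝ)/M)^j) - 1)^2
        = (P.eval (m:ℝ))^2 / (P.coeff 0)^2 := by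
      intro m hm
      rw [hvst m hm, div_pow, neg_sq]
    rw [Finset.sum_congr rfl h1, ← Finset.sum_div, hPsq]
    field_simp
  -- lower bound
  have hlow : ∀ w : ℕ → ℝ, Sv / P.coeff 0
      ≤ ∑ m ∈ Icc 1 M, ((∑ j ∈ Icc 1 L, w j * ((m:ℝ)/M)^j) - 1)^2 := by
    intro w
    have hcs := Finset.sum_mul_sq_le_sq_mul_sq (Icc 1 M)
      (fun m => (∑ j ∈ Icc 1 L, w j * ((m:ℝ)/M)^j) - 1) (fun m => P.eval (m:ℝ))
    rw [hfun w, hPsq, neg_sq] at hcs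
    have h1 : Sv / P.coeff 0 = Sv^2 / (P.coeff 0 * Sv) := by
      field_simp
    rw [h1, div_le_iff₀ (by positivity)]
    calc Sv^2 ≤ (∑ m ∈ Icc 1 M, ((∑ j ∈ Icc 1 L, w j * ((m:ℝ)/M)^j) - 1)^2)
          * (P.coeff 0 * Sv) := hcs
      _ = _ := by ring
  have hEinv : Sv / P.coeff 0 = E⁻¹ := by
    rw [ha0E]
    rw [div_eq_iff (by positivity : Sv * E ≠ 0)]
    field_simp
  have hVx : Real.sqrt (Sv / P.coeff 0) = E ^ (-(1:ℝ)/2) := by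
    rw [hEinv]
    have hh : (-(1:ℝ)/2) = -(1/2 : ℝ) := by norm_num
    rw [hh, Real.rpow_neg hEpos.le, ← Real.sqrt_eq_rpow, Real.sqrt_inv]
  apply le_antisymm
  · have hb : BddBelow (Set.range fun w : ℕ → ℝ => Real.sqrt (∑ m ∈ Icc 1 M,
        ((∑ j ∈ Icc 1 L, w j * ((m:ℝ)/M)^j) - 1)^2)) := by
      refine ⟨0, ?_⟩
      rintro x ⟨w, rfl⟩
      exact Real.sqrt_nonneg _
    calc (⨅ w : ℕ → ℝ, Real.sqrt (∑ m ∈ Icc 1 M,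
            ((∑ j ∈ Icc 1 L, w j * ((m:ℝ)/M)^j) - 1)^2))
        ≤ Real.sqrt (∑ m ∈ Icc 1 M,
            ((∑ j ∈ Icc 1 L, wst j * ((m:ℝ)/M)^j) - 1)^2) := ciInf_le hb wst
      _ = E ^ (-(1:ℝ)/2) := by rw [hval, hVx]
  · apply le_ciInf
    intro w
    rw [← hVx]
    exact Real.sqrt_le_sqrt (hlow w)
end

section
/- Consider an urn with k balls, k_i of color i (k_i ∈ ℤ≥0, Σ_i k_i = k), and p_i = k_i/k. Assume Poisson sampling: N_i independent with N_i ~ Poisson(n·p_i). Let L = α·log k and M = β·k·log k / n be integers with β > α > 0. Then the probability that some color i satisfies both N_i ≤ L and k·p_i > M is at most k^{1 − β + α·log(eβ/α)}; that is, P[∃ i : N_i ≤ L and k_i > M] ≤ k^{1 − β + α·log(eβ/α)}. -/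
open MeasureTheory ProbabilityTheory Real ENNReal
open scoped NNReal Nat

lemma aux_poisson_tail (r : ℝ≥0) (L : ℕ) (hL1 : 1 ≤ L) (hLr : (L : ℝ) ≤ r) :
    poissonMeasure r {m | m ≤ L}
      ≤ ENNReal.ofReal (Real.exp ((L : ℝ) - r) * ((r : ℝ) / L) ^ L) := by
  have hLpos : (0 : ℝ) < L := by exact_mod_cast hL1
  have hrL : (1 : ℝ) ≤ (r : ℝ) / L := (one_le_div hLpos).2 hLr
  have hset : {m : ℕ | m ≤ L} = ↑(Finset.range (L + 1)) := by
    ext m; simp [Nat.lt_succ_iff]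
  rw [hset, ← sum_measure_singleton]
  simp_rw [poissonMeasure_singleton]
  change ∑ j ∈ Finset.range (L + 1), poissonPMF r j ≤ _
  have hpmf : ∀ j, poissonPMF r j = ENNReal.ofReal (poissonPMFReal r j) := fun j => rfl
  simp_rw [hpmf]
  rw [← ENNReal.ofReal_sum_of_nonneg (fun j _ => poissonPMFReal_nonneg)]
  apply ENNReal.ofReal_le_ofReal
  have hterm : ∀ j ∈ Finset.range (L + 1),
      poissonPMFReal r j ≤ Real.exp (-(r : ℝ)) * (((r : ℝ) / L) ^ L * ((L : ℝ) ^ j / j !)) := by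
    intro j hj
    rw [Finset.mem_range, Nat.lt_succ_iff] at hj
    unfold poissonPMFReal
    rw [mul_div_assoc]
    apply mul_le_mul_of_nonneg_left _ (Real.exp_nonneg _)
    have h1 : (r : ℝ) ^ j = ((r : ℝ) / L) ^ j * (L : ℝ) ^ j := by
      rw [div_pow, div_mul_eq_mul_div, mul_div_assoc, div_self (by positivity), mul_one]
    rw [h1]
    have h2 : ((r : ℝ) / L) ^ j ≤ ((r : ℝ) / L) ^ L := pow_le_pow_right₀ hrL hj
    have h3 : (0 : ℝ) ≤ (L : ℝ) ^ j / j ! := by positivity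
    calc ((r : ℝ) / L) ^ j * (L : ℝ) ^ j / j !
        = ((r : ℝ) / L) ^ j * ((L : ℝ) ^ j / j !) := by ring
      _ ≤ ((r : ℝ) / L) ^ L * ((L : ℝ) ^ j / j !) := mul_le_mul_of_nonneg_right h2 h3
  calc ∑ j ∈ Finset.range (L + 1), poissonPMFReal r j
      ≤ ∑ j ∈ Finset.range (L + 1),
          Real.exp (-(r : ℝ)) * (((r : ℝ) / L) ^ L * ((L : ℝ) ^ j / j !)) :=
        Finset.sum_le_sum hterm
    _ = Real.exp (-(r : ℝ)) * (((r : ℝ) / L) ^ L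
          * ∑ j ∈ Finset.range (L + 1), (L : ℝ) ^ j / j !) := by
        rw [← Finset.mul_sum, ← Finset.mul_sum]
    _ ≤ Real.exp (-(r : ℝ)) * (((r : ℝ) / L) ^ L * Real.exp L) := by
        apply mul_le_mul_of_nonneg_left _ (Real.exp_nonneg _)
        apply mul_le_mul_of_nonneg_left (Real.sum_le_exp_of_nonneg hLpos.le _) (by positivity)
    _ = Real.exp ((L : ℝ) - r) * ((r : ℝ) / L) ^ L := by
        rw [Real.exp_sub, Real.exp_neg]; field_simp

lemma aux_mono (L : ℕ) (a b : ℝ) (hLa : (L : ℝ) ≤ a) (h0 : 0 < a) (hab : a ≤ b) :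
    Real.exp ((L : ℝ) - b) * (b / L) ^ L ≤ Real.exp ((L : ℝ) - a) * (a / L) ^ L := by
  rcases Nat.eq_zero_or_pos L with hL0 | hL1
  · subst hL0; simp [Real.exp_le_exp]; linarith
  have hLpos : (0 : ℝ) < L := by exact_mod_cast hL1
  have hb : 0 < b := lt_of_lt_of_le h0 hab
  have key : ((b / a) : ℝ) ^ L ≤ Real.exp (b - a) := by
    have hba : 0 < b / a := by positivity
    have h1 : ((b / a) : ℝ) ^ L = Real.exp ((L : ℝ) * Real.log (b / a)) := by
      rw [Real.exp_nat_mul, Real.exp_log hba]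
    rw [h1, Real.exp_le_exp]
    have h2 : Real.log (b / a) ≤ b / a - 1 := Real.log_le_sub_one_of_pos hba
    have h3 : (L : ℝ) * Real.log (b / a) ≤ (L : ℝ) * (b / a - 1) :=
      mul_le_mul_of_nonneg_left h2 (by positivity)
    have h4 : (L : ℝ) * (b / a - 1) ≤ a * (b / a - 1) := by
      apply mul_le_mul_of_nonneg_right hLa
      have : (1 : ℝ) ≤ b / a := (one_le_div h0).2 hab
      linarith
    have h5 : a * (b / a - 1) = b - a := by field_simp
    linarith
  have hbL : (b / L) ^ L = (b / a) ^ L * (a / L) ^ L := by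
    rw [← mul_pow]; congr 1; field_simp
  rw [hbL]
  calc Real.exp ((L : ℝ) - b) * ((b / a) ^ L * (a / L) ^ L)
      ≤ Real.exp ((L : ℝ) - b) * (Real.exp (b - a) * (a / L) ^ L) := by
        apply mul_le_mul_of_nonneg_left _ (Real.exp_nonneg _)
        exact mul_le_mul_of_nonneg_right key (by positivity)
    _ = Real.exp ((L : ℝ) - a) * (a / L) ^ L := by
        rw [← mul_assoc, ← Real.exp_add,
          show (L : ℝ) - b + (b - a) = (L : ℝ) - a by ring]

theorem stmt19 (k n : ℕ) (hk : 1 ≤ k) (hn : 1 ≤ n)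
    (kball : ℕ → ℕ) (hsum : HasSum (fun i => (kball i : ℝ)) k)
    (L M : ℕ) (α β : ℝ) (hα : 0 < α) (hαβ : α < β)
    (hL : (L : ℝ) = α * Real.log k) (hM : (M : ℝ) = β * k * Real.log k / n)
    {Ω : Type*} [MeasurableSpace Ω] (μ : Measure Ω) [IsProbabilityMeasure μ]
    (N : ℕ → Ω → ℕ) (hmeas : ∀ i, Measurable (N i))
    (hindep : iIndepFun N μ)
    (hlaw : ∀ i, μ.map (N i) = poissonMeasure (Real.toNNReal ((n : ℝ) * kball i / k))) :
    μ {ω | ∃ i, N i ω ≤ L ∧ M < kball i}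
      ≤ ENNReal.ofReal ((k : ℝ) ^ (1 - β + α * Real.log (Real.exp 1 * β / α))) := by
  rcases eq_or_lt_of_le hk with hk1 | hk2
  · -- k = 1 : trivial since the RHS is 1
    rw [← hk1, Nat.cast_one, Real.one_rpow, ENNReal.ofReal_one]
    exact prob_le_one
  -- now 2 ≤ k
  have hkR : (1 : ℝ) < k := by exact_mod_cast hk2
  have hk0 : (0 : ℝ) < k := by linarith
  have hn0 : (0 : ℝ) < n := by exact_mod_cast hn
  have hlogk : 0 < Real.log k := Real.log_pos hkR
  have hβ : 0 < β := lt_trans hα hαβ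
  have hL1 : 1 ≤ L := by
    by_contra h
    push_neg at h
    interval_cases L
    · simp only [Nat.cast_zero] at hL
      nlinarith [mul_pos hα hlogk]
  have hLpos : (0 : ℝ) < L := by exact_mod_cast hL1
  -- the set of "heavy" colors is finite with at most k elements
  have hfin : {i | M < kball i}.Finite := by
    have h1 : ∀ᶠ i in Filter.cofinite, (kball i : ℝ) < 1 :=
      Filter.Tendsto.eventually_lt_const one_pos hsum.summable.tendsto_cofinite_zero
    have h2 : ∀ᶠ i in Filter.cofinite, ¬ M < kball i := by
      apply h1.mono
      intro i hi
      intro hMi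
      have hkb : 1 ≤ kball i := Nat.one_le_iff_ne_zero.2 (by omega)
      have : (1 : ℝ) ≤ (kball i : ℝ) := by exact_mod_cast hkb
      linarith
    simpa using Filter.eventually_cofinite.mp h2
  set T : Finset ℕ := hfin.toFinset with hT
  have hmemT : ∀ i, i ∈ T ↔ M < kball i := by
    intro i; rw [hT, Set.Finite.mem_toFinset]; rfl
  have hcard : (T.card : ℝ) ≤ k := by
    calc (T.card : ℝ) = ∑ _i ∈ T, (1 : ℝ) := by simp
      _ ≤ ∑ i ∈ T, (kball i : ℝ) := by
          apply Finset.sum_le_sum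
          intro i hi
          have : M < kball i := (hmemT i).1 hi
          have : 1 ≤ kball i := Nat.one_le_iff_ne_zero.2 (fun h => by simp [h] at this)
          exact_mod_cast this
      _ ≤ k := sum_le_hasSum T (fun i _ => by positivity) hsum
  -- per-color bound
  set C : ℝ := (k : ℝ) ^ (-β + α * Real.log (Real.exp 1 * β / α)) with hC
  have hCnonneg : 0 ≤ C := Real.rpow_nonneg hk0.le _
  have hbound : ∀ i ∈ T, μ {ω | N i ω ≤ L} ≤ ENNReal.ofReal C := by
    intro i hi
    have hMi : M < kball i := (hmemT i).1 hi
    set r : ℝ≥0 := Real.toNNReal ((n : ℝ) * kball i / k) with hr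
    have hrval : (r : ℝ) = (n : ℝ) * kball i / k := by
      rw [hr, Real.coe_toNNReal]; positivity
    have hrβ : β * Real.log k ≤ (r : ℝ) := by
      rw [hrval]
      have h1 : (M : ℝ) ≤ (kball i : ℝ) := by exact_mod_cast hMi.le
      have h2 : β * Real.log k = (n : ℝ) * M / k := by
        rw [hM]; field_simp
      rw [h2]
      gcongr
    have hLr : (L : ℝ) ≤ (r : ℝ) := by
      rw [hL]
      calc α * Real.log k ≤ β * Real.log k := by nlinarith
        _ ≤ (r : ℝ) := hrβ
    have hmap : μ {ω | N i ω ≤ L} = poissonMeasure r {m | m ≤ L} := by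
      have : {ω | N i ω ≤ L} = N i ⁻¹' (Set.Iic L) := rfl
      rw [this, ← Measure.map_apply (hmeas i) measurableSet_Iic, hlaw i, ← hr]
      rfl
    rw [hmap]
    calc poissonMeasure r {m | m ≤ L}
        ≤ ENNReal.ofReal (Real.exp ((L : ℝ) - r) * ((r : ℝ) / L) ^ L) :=
          aux_poisson_tail r L hL1 hLr
      _ ≤ ENNReal.ofReal (Real.exp ((L : ℝ) - β * Real.log k)
            * (β * Real.log k / L) ^ L) := by
          apply ENNReal.ofReal_le_ofReal
          apply aux_mono L (β * Real.log k) r _ (by positivity) hrβ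
          rw [hL]; nlinarith
      _ = ENNReal.ofReal C := by
          congr 1
          have hdiv : β * Real.log k / (L : ℝ) = β / α := by
            rw [hL]; field_simp
          rw [hdiv, hC]
          have hpow : (β / α) ^ L = Real.exp ((L : ℝ) * Real.log (β / α)) := by
            rw [Real.exp_nat_mul, Real.exp_log (by positivity)]
          rw [hpow, Real.rpow_def_of_pos hk0, ← Real.exp_add, hL]
          congr 1
          have hlog : Real.log (Real.exp 1 * β / α) = 1 + Real.log (β / α) := by
            rw [mul_div_assoc, Real.log_mul (Real.exp_ne_zero 1) (by positivity),
              Real.log_exp]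
          rw [hlog]; ring
  -- union bound
  have hsubset : {ω | ∃ i, N i ω ≤ L ∧ M < kball i} ⊆ ⋃ i ∈ T, {ω | N i ω ≤ L} := by
    intro ω hω
    obtain ⟨i, h1, h2⟩ := hω
    exact Set.mem_biUnion ((hmemT i).2 h2) h1
  calc μ {ω | ∃ i, N i ω ≤ L ∧ M < kball i}
      ≤ μ (⋃ i ∈ T, {ω | N i ω ≤ L}) := measure_mono hsubset
    _ ≤ ∑ i ∈ T, μ {ω | N i ω ≤ L} := measure_biUnion_finset_le T _
    _ ≤ ∑ _i ∈ T, ENNReal.ofReal C := Finset.sum_le_sum hbound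
    _ = ENNReal.ofReal ((T.card : ℝ) * C) := by
        rw [Finset.sum_const, nsmul_eq_mul, ← ENNReal.ofReal_natCast,
          ← ENNReal.ofReal_mul (by positivity)]
    _ ≤ ENNReal.ofReal ((k : ℝ) * C) :=
        ENNReal.ofReal_le_ofReal (mul_le_mul_of_nonneg_right hcard hCnonneg)
    _ = ENNReal.ofReal ((k : ℝ) ^ (1 - β + α * Real.log (Real.exp 1 * β / α))) := by
        congr 1
        rw [show (1 : ℝ) - β + α * Real.log (Real.exp 1 * β / α)
            = 1 + (-β + α * Real.log (Real.exp 1 * β / α)) by ring,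
          Real.rpow_add hk0 1 (-β + α * Real.log (Real.exp 1 * β / α)),
          Real.rpow_one, hC]
end
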